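/- arXiv:0807.2714 — 5 statements merged into one kernel-verified Lean document; each statement's English description precedes it below -/
import Mathlib

section
/- Let A be the Laurent polynomial ring over ℂ in N ≥ 1 variables. Let v ∈ ℤ^N be a nonzero exponent vector, X^v the corresponding Laurent monomial, and ω₀ ∈ ℂ a root of unity. Then every irreducible factor of X^v − ω₀ in A is of the form u·(X^w − ω), where u is a unit of A, w ∈ ℤ^N is nonzero, and ω ∈ ℂ is a root of unity. -/
open scoped Classical

namespace CCnDAHA

variable {n : ℕ}




/-- Laurent polynomial ring in N variables over K. -/
abbrev LaurentMv (K : Type*) [CommRing K] (N : ℕ) : Type _ := AddMonoidAlgebra K (Fin N →₀ ℤ)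

/-- evaluation of a Laurent polynomial at a point z. -/
noncomputable def evalAt {K : Type*} [Field K] (z : Fin n → K) (f : LaurentMv K n) : K :=
  Finsupp.sum f.coeff (fun v c => c * ∏ i, z i ^ (v i))

/-- cyclic successor in Fin k1. -/
def finSucc {k1 : ℕ} (m : Fin k1) : Fin k1 :=
  ⟨((m : ℕ) + 1) % k1, Nat.mod_lt _ (by have := m.isLt; omega)⟩

/-- A wheel of type (k1, r1) in z, with parameters t, q. -/
def IsWheel {K : Type*} [Field K] (k1 r1 : ℕ) (t q : K) (z : Fin n → Kˣ)
    (idx : Fin k1 → Fin n) (sg : Fin k1 → ℤ) (p : Fin k1 → ℕ) : Prop :=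
  Function.Injective idx ∧
  (∀ m, sg m = 1 ∨ sg m = -1) ∧
  (∑ m, p m) = r1 ∧
  (∀ m : Fin k1, ((z (idx m) : K) ^ (sg m)) * t * q ^ (p m)
      = (z (idx (finSucc m)) : K) ^ (sg (finSucc m))) ∧
  (∀ m : Fin k1, p m = 0 →
    (sg m = 1 ∧ sg (finSucc m) = 1 ∧ idx m < idx (finSucc m)) ∨
    (sg m = 1 ∧ sg (finSucc m) = -1) ∨
    (sg m = -1 ∧ sg (finSucc m) = -1 ∧ idx (finSucc m) < idx m))

/-- z admits mw wheels of type (k1,r1) with pairwise disjoint index sets. -/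
def HasWheels {K : Type*} [Field K] (k1 r1 : ℕ) (t q : K) (mw : ℕ) (z : Fin n → Kˣ) : Prop :=
  ∃ (idx : Fin mw → Fin k1 → Fin n) (sg : Fin mw → Fin k1 → ℤ) (p : Fin mw → Fin k1 → ℕ),
    (∀ a, IsWheel k1 r1 t q z (idx a) (sg a) (p a)) ∧
    (∀ a b, a ≠ b → ∀ m m', idx a m ≠ idx b m')

/-- the mw-wheel condition of type (k1, r1). -/
def SatisfiesWheel {K : Type*} [Field K] (k1 r1 : ℕ) (t q : K) (mw : ℕ)
    (f : LaurentMv K n) : Prop :=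
  ∀ z : Fin n → Kˣ, HasWheels k1 r1 t q mw z → evalAt (fun i => (z i : K)) f = 0

/-- The six-variable Laurent polynomial ring A (variables Q,T,T_n,T_0,U_n,U_0 = 0,…,5). -/
abbrev A6 : Type := AddMonoidAlgebra ℂ (Fin 6 →₀ ℤ)

/-- image of x ∈ A in the fraction field K_s of A/(s). -/
noncomputable def bar (s : A6) (x : A6) : FractionRing (A6 ⧸ Ideal.span {s}) :=
  algebraMap (A6 ⧸ Ideal.span {s}) (FractionRing (A6 ⧸ Ideal.span {s}))
    (Ideal.Quotient.mk (Ideal.span {s}) x)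

/-- the permutation action s_i f (1 ≤ i ≤ n−1), swapping the variables x_i, x_j. -/
noncomputable def sSwap {K : Type*} [CommRing K] (i j : Fin n) (f : LaurentMv K n) :
    LaurentMv K n :=
  Finsupp.sum f.coeff (fun v c =>
    AddMonoidAlgebra.single (Finsupp.equivMapDomain (Equiv.swap i j) v) c)

/-- the action s_n f : x_i ↦ x_i⁻¹. -/
noncomputable def sNeg {K : Type*} [CommRing K] (i : Fin n) (f : LaurentMv K n) :
    LaurentMv K n :=
  Finsupp.sum f.coeff (fun v c => AddMonoidAlgebra.single (Finsupp.update v i (-(v i))) c)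

/-- the action s_0 f : x_i ↦ q·x_i⁻¹. -/
noncomputable def sNegQ {K : Type*} [Field K] (q : K) (i : Fin n) (f : LaurentMv K n) :
    LaurentMv K n :=
  Finsupp.sum f.coeff (fun v c =>
    AddMonoidAlgebra.single (Finsupp.update v i (-(v i))) (c * q ^ (v i)))

/-- defining relation of the Noumi operator T̂_i (1 ≤ i ≤ n−1), for the adjacent pair (i,j):
(1 − x_i x_j^{−1})(g − t^{1/2} f) = t^{−1/2}(1 − t x_i x_j^{−1})(s_i f − f). -/
def RelMid {K : Type*} [Field K] (th : K) (i j : Fin n) (f g : LaurentMv K n) : Prop :=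
  (AddMonoidAlgebra.single 0 1
      - AddMonoidAlgebra.single (Finsupp.single i 1 + Finsupp.single j (-1)) (1 : K))
      * (g - th • f)
    = th⁻¹ • ((AddMonoidAlgebra.single 0 1
      - AddMonoidAlgebra.single (Finsupp.single i 1 + Finsupp.single j (-1)) (th ^ 2))
      * (sSwap i j f - f))

/-- defining relation of T̂_n (i is the last variable):
(1 − x_i²)(g − t_n^{1/2} f) = t_n^{−1/2}(1 − a x_i)(1 − b x_i)(s_n f − f). -/
def RelLast {K : Type*} [Field K] (tnh a b : K) (i : Fin n) (f g : LaurentMv K n) : Prop :=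
  (AddMonoidAlgebra.single 0 1 - AddMonoidAlgebra.single (Finsupp.single i 2) (1 : K))
      * (g - tnh • f)
    = tnh⁻¹ • (((AddMonoidAlgebra.single 0 1 - AddMonoidAlgebra.single (Finsupp.single i 1) a)
        * (AddMonoidAlgebra.single 0 1 - AddMonoidAlgebra.single (Finsupp.single i 1) b))
      * (sNeg i f - f))

/-- defining relation of T̂_0 (i is the first variable):
(1 − q x_i^{−2})(g − t_0^{1/2} f) = t_0^{−1/2}(1 − c x_i^{−1})(1 − d x_i^{−1})(s_0 f − f). -/
def RelZero {K : Type*} [Field K] (t0h q c d : K) (i : Fin n) (f g : LaurentMv K n) : Prop :=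
  (AddMonoidAlgebra.single 0 1 - AddMonoidAlgebra.single (Finsupp.single i (-2)) q)
      * (g - t0h • f)
    = t0h⁻¹ • (((AddMonoidAlgebra.single 0 1 - AddMonoidAlgebra.single (Finsupp.single i (-1)) c)
        * (AddMonoidAlgebra.single 0 1 - AddMonoidAlgebra.single (Finsupp.single i (-1)) d))
      * (sNegQ q i f - f))



section Stmt0Aux

variable {N : ℕ}

theorem aux_neg_single (a : Fin N →₀ ℤ) (b : ℂ) :
    (AddMonoidAlgebra.single a (-b) : LaurentMv ℂ N) = -AddMonoidAlgebra.single a b :=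
  AddMonoidAlgebra.single_neg a b

theorem aux_single_isUnit (w : Fin N →₀ ℤ) (c : ℂ) (hc : c ≠ 0) :
    IsUnit (AddMonoidAlgebra.single w c : LaurentMv ℂ N) := by
  apply IsUnit.of_mul_eq_one (AddMonoidAlgebra.single (-w) c⁻¹)
  rw [AddMonoidAlgebra.single_mul_single, add_neg_cancel, mul_inv_cancel₀ hc,
    ← AddMonoidAlgebra.one_def]

/-- the monoid hom underlying substitution x_i := r. -/
noncomputable def substMon (i : Fin N) (r : ℂ) (hr : r ≠ 0) :
    Multiplicative (Fin N →₀ ℤ) →* LaurentMv ℂ N where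
  toFun v := AddMonoidAlgebra.single (Finsupp.erase i v.toAdd) (r ^ (v.toAdd i))
  map_one' := by
    have h0 : (Multiplicative.toAdd (1 : Multiplicative (Fin N →₀ ℤ))) = 0 := rfl
    simp only [h0, Finsupp.erase_zero, Finsupp.coe_zero, Pi.zero_apply, zpow_zero]
    exact (AddMonoidAlgebra.one_def).symm
  map_mul' a b := by
    have h0 : (Multiplicative.toAdd (a * b)) = a.toAdd + b.toAdd := rfl
    simp only [h0, Finsupp.erase_add, Finsupp.add_apply, zpow_add₀ hr,
      AddMonoidAlgebra.single_mul_single]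

/-- substitution x_i := r as an algebra endomorphism. -/
noncomputable def substA (i : Fin N) (r : ℂ) (hr : r ≠ 0) :
    LaurentMv ℂ N →ₐ[ℂ] LaurentMv ℂ N :=
  AddMonoidAlgebra.lift ℂ _ _ (substMon i r hr)

theorem substA_single (i : Fin N) (r : ℂ) (hr : r ≠ 0) (v : Fin N →₀ ℤ) (c : ℂ) :
    substA i r hr (AddMonoidAlgebra.single v c)
      = AddMonoidAlgebra.single (Finsupp.erase i v) (c * r ^ (v i)) := by
  rw [substA, AddMonoidAlgebra.lift_single]
  rw [show (substMon i r hr (Multiplicative.ofAdd v))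
      = AddMonoidAlgebra.single (Finsupp.erase i v) (r ^ (v i)) from rfl]
  rw [AddMonoidAlgebra.smul_single']

theorem q_dvd_geom (i : Fin N) (r : ℂ) (hr : r ≠ 0) (k : ℤ) :
    (AddMonoidAlgebra.single (Finsupp.single i 1) 1
        - AddMonoidAlgebra.single 0 r : LaurentMv ℂ N)
      ∣ (AddMonoidAlgebra.single (Finsupp.single i k) 1 - AddMonoidAlgebra.single 0 (r ^ k)) := by
  have hnat : ∀ m : ℕ, (AddMonoidAlgebra.single (Finsupp.single i 1) 1
        - AddMonoidAlgebra.single 0 r : LaurentMv ℂ N)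
      ∣ (AddMonoidAlgebra.single (Finsupp.single i (m : ℤ)) 1
          - AddMonoidAlgebra.single 0 (r ^ (m : ℕ)) : LaurentMv ℂ N) := by
    intro m
    induction m with
    | zero => simp
    | succ m ih =>
      have key : (AddMonoidAlgebra.single (Finsupp.single i ((m + 1 : ℕ) : ℤ)) 1
            - AddMonoidAlgebra.single 0 (r ^ (m + 1)) : LaurentMv ℂ N)
          = AddMonoidAlgebra.single (Finsupp.single i 1) 1
              * (AddMonoidAlgebra.single (Finsupp.single i (m : ℤ)) 1
                  - AddMonoidAlgebra.single 0 (r ^ m))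
            + AddMonoidAlgebra.single 0 (r ^ m)
              * (AddMonoidAlgebra.single (Finsupp.single i 1) 1
                  - AddMonoidAlgebra.single 0 r) := by
        have e1 : ((m + 1 : ℕ) : ℤ) = 1 + (m : ℤ) := by push_cast; ring
        have e2 : r ^ (m + 1) = r ^ m * r := by rw [pow_succ]
        rw [e1, e2, mul_sub, mul_sub]
        simp only [AddMonoidAlgebra.single_mul_single, ← Finsupp.single_add, one_mul, mul_one,
          add_zero, zero_add]
        abel
      rw [key]
      exact dvd_add (Dvd.dvd.mul_left ih _) (Dvd.dvd.mul_left dvd_rfl _)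
  rcases Int.eq_nat_or_neg k with ⟨m, rfl | rfl⟩
  · simpa [zpow_natCast] using hnat m
  · have h := hnat m
    have key : (AddMonoidAlgebra.single (Finsupp.single i (-(m : ℤ))) 1
          - AddMonoidAlgebra.single 0 (r ^ (-(m : ℤ))) : LaurentMv ℂ N)
        = AddMonoidAlgebra.single (Finsupp.single i (-(m : ℤ))) (-(r ^ (-(m : ℤ))))
            * (AddMonoidAlgebra.single (Finsupp.single i (m : ℤ)) 1
                - AddMonoidAlgebra.single 0 (r ^ (m : ℕ))) := by
      rw [mul_sub]
      simp only [AddMonoidAlgebra.single_mul_single, ← Finsupp.single_add, neg_add_cancel,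
        Finsupp.single_zero, add_zero, mul_one]
      have h2 : -r ^ (-(m : ℤ)) * r ^ (m : ℕ) = -1 := by
        rw [neg_mul, ← zpow_natCast r m, ← zpow_add₀ hr, neg_add_cancel, zpow_zero]
      rw [h2, aux_neg_single, aux_neg_single]
      abel
    rw [key]
    exact Dvd.dvd.mul_left h _

theorem q_dvd_sub_substA (i : Fin N) (r : ℂ) (hr : r ≠ 0) (f : LaurentMv ℂ N) :
    (AddMonoidAlgebra.single (Finsupp.single i 1) 1
        - AddMonoidAlgebra.single 0 r : LaurentMv ℂ N)
      ∣ f - substA i r hr f := by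
  induction f using AddMonoidAlgebra.induction with
  | zero => simp
  | single_add v c f hv hc ih =>
    have h2 : (AddMonoidAlgebra.single (Finsupp.single i 1) 1
          - AddMonoidAlgebra.single 0 r : LaurentMv ℂ N)
        ∣ (AddMonoidAlgebra.single v c
            - substA i r hr (AddMonoidAlgebra.single v c)) := by
      rw [substA_single]
      have key : (AddMonoidAlgebra.single v c : LaurentMv ℂ N)
            - AddMonoidAlgebra.single (Finsupp.erase i v) (c * r ^ (v i))
          = AddMonoidAlgebra.single (Finsupp.erase i v) c
              * (AddMonoidAlgebra.single (Finsupp.single i (v i)) 1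
                  - AddMonoidAlgebra.single 0 (r ^ (v i))) := by
        rw [mul_sub, AddMonoidAlgebra.single_mul_single, AddMonoidAlgebra.single_mul_single,
          mul_one, add_zero, Finsupp.erase_add_single]
      rw [key]
      exact Dvd.dvd.mul_left (q_dvd_geom i r hr (v i)) _
    have hsum := dvd_add h2 ih
    rw [sub_add_sub_comm, ← map_add] at hsum
    exact hsum

theorem substA_q (i : Fin N) (r : ℂ) (hr : r ≠ 0) :
    substA i r hr (AddMonoidAlgebra.single (Finsupp.single i 1) 1
      - AddMonoidAlgebra.single 0 r) = 0 := by
  rw [map_sub, substA_single, substA_single]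
  simp [Finsupp.erase_single]

theorem q_dvd_iff (i : Fin N) (r : ℂ) (hr : r ≠ 0) (f : LaurentMv ℂ N) :
    (AddMonoidAlgebra.single (Finsupp.single i 1) 1
        - AddMonoidAlgebra.single 0 r : LaurentMv ℂ N) ∣ f ↔ substA i r hr f = 0 := by
  constructor
  · rintro ⟨c, rfl⟩
    rw [map_mul, substA_q i r hr, zero_mul]
  · intro h
    have h3 := q_dvd_sub_substA i r hr f
    rwa [h, sub_zero] at h3

theorem prime_q (i : Fin N) (r : ℂ) (hr : r ≠ 0) :
    Prime (AddMonoidAlgebra.single (Finsupp.single i 1) 1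
      - AddMonoidAlgebra.single 0 r : LaurentMv ℂ N) := by
  refine ⟨?_, ?_, ?_⟩
  · intro h
    rw [sub_eq_zero] at h
    have h0 := Finsupp.ext_iff.mp (congrArg AddMonoidAlgebra.coeff h) 0
    have hne : (Finsupp.single i 1 : Fin N →₀ ℤ) ≠ 0 :=
      fun h => one_ne_zero (Finsupp.single_eq_zero.mp h)
    rw [AddMonoidAlgebra.coeff_single, AddMonoidAlgebra.coeff_single] at h0
    rw [Finsupp.single_apply, Finsupp.single_apply, if_neg hne, if_pos rfl] at h0
    exact hr h0.symm
  · intro h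
    have h1 : (AddMonoidAlgebra.single (Finsupp.single i 1) 1
        - AddMonoidAlgebra.single 0 r : LaurentMv ℂ N) ∣ 1 := h.dvd
    rw [q_dvd_iff i r hr] at h1
    rw [map_one] at h1
    exact one_ne_zero h1
  · intro a b hab
    rw [q_dvd_iff i r hr, map_mul] at hab
    rcases mul_eq_zero.mp hab with h | h
    · exact Or.inl ((q_dvd_iff i r hr a).mpr h)
    · exact Or.inr ((q_dvd_iff i r hr b).mpr h)

theorem irred_dvd_prod {α : Type*} [CommMonoidWithZero α] [IsCancelMulZero α] {p : α} (hp : Irreducible p) :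
    ∀ (s : Multiset α), (∀ q ∈ s, Prime q) → p ∣ s.prod → ∃ q ∈ s, Associated p q := by
  intro s
  induction s using Multiset.induction with
  | empty =>
    intro _ h
    rw [Multiset.prod_zero] at h
    exact absurd (isUnit_of_dvd_one h) hp.not_isUnit
  | cons q t ih =>
    intro hs hdvd
    have hq : Prime q := hs q (Multiset.mem_cons_self q t)
    rw [Multiset.prod_cons] at hdvd
    obtain ⟨c, hc⟩ := hdvd
    have hqd : q ∣ p * c := hc ▸ dvd_mul_right q t.prod
    rcases hq.dvd_or_dvd hqd with hqp | hqc
    · exact ⟨q, Multiset.mem_cons_self q t, (hq.irreducible.associated_of_dvd hp hqp).symm⟩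
    · obtain ⟨c', rfl⟩ := hqc
      have heq : q * t.prod = q * (p * c') := by rw [hc, mul_left_comm]
      have ht : p ∣ t.prod := ⟨c', mul_left_cancel₀ hq.ne_zero heq⟩
      obtain ⟨q', hq', ha⟩ := ih (fun x hx => hs x (Multiset.mem_cons_of_mem hx)) ht
      exact ⟨q', Multiset.mem_cons_of_mem hq', ha⟩

theorem flip_eq (w : Fin N →₀ ℤ) (ω : ℂ) (hω : ω ≠ 0) :
    (AddMonoidAlgebra.single w 1 - AddMonoidAlgebra.single 0 ω : LaurentMv ℂ N)
      = AddMonoidAlgebra.single w (-ω)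
          * (AddMonoidAlgebra.single (-w) 1 - AddMonoidAlgebra.single 0 ω⁻¹) := by
  rw [mul_sub, AddMonoidAlgebra.single_mul_single, AddMonoidAlgebra.single_mul_single,
    add_neg_cancel, add_zero, mul_one, neg_mul, mul_inv_cancel₀ hω]
  rw [aux_neg_single, aux_neg_single]
  abel

theorem irreducible_map_mulEquiv {α β : Type*} [Monoid α] [Monoid β] (e : α ≃* β) {p : α}
    (h : Irreducible p) : Irreducible (e p) := by
  constructor
  · intro hu
    have h2 := hu.map e.symm.toMonoidHom
    simp only [MulEquiv.coe_toMonoidHom, MulEquiv.symm_apply_apply] at h2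
    exact h.not_isUnit h2
  · intro a b hab
    have hp : p = e.symm a * e.symm b := by
      apply e.injective
      rw [map_mul, MulEquiv.apply_symm_apply, MulEquiv.apply_symm_apply, hab]
    rcases h.isUnit_or_isUnit hp with h' | h'
    · left
      have h2 := h'.map e.toMonoidHom
      simpa using h2
    · right
      have h2 := h'.map e.toMonoidHom
      simpa using h2

end Stmt0Aux


/-- every irreducible factor of X^v − ω₀ (ω₀ a root of unity, v ≠ 0) in the
Laurent polynomial ring ℂ[x_1^{±1},…,x_N^{±1}] is a unit times (X^w − ω) with w ≠ 0 and
ω a root of unity. -/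
theorem stmt0 (N : ℕ) (hN : 1 ≤ N) (v : Fin N →₀ ℤ) (hv : v ≠ 0)
    (ω₀ : ℂ) (m₀ : ℕ) (hm₀ : 0 < m₀) (hω₀ : ω₀ ^ m₀ = 1)
    (p : LaurentMv ℂ N) (hp : Irreducible p)
    (hdvd : p ∣ (AddMonoidAlgebra.single v 1 - AddMonoidAlgebra.single 0 ω₀)) :
    ∃ (u : (LaurentMv ℂ N)ˣ) (w : Fin N →₀ ℤ) (ω : ℂ) (m : ℕ),
      w ≠ 0 ∧ 0 < m ∧ ω ^ m = 1 ∧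
      p = (u : LaurentMv ℂ N) *
        (AddMonoidAlgebra.single w 1 - AddMonoidAlgebra.single 0 ω) := by
  classical
  have hω0ne : ω₀ ≠ 0 := by
    intro h
    rw [h, zero_pow hm₀.ne'] at hω₀
    exact zero_ne_one hω₀
  -- Smith normal form: v = d • (basis vector)
  obtain ⟨nn, snf⟩ := Submodule.smithNormalForm
    (Finsupp.basisSingleOne : Module.Basis (Fin N) ℤ (Fin N →₀ ℤ)) (Submodule.span ℤ {v})
  have hinj : Function.Injective (LinearMap.toSpanSingleton ℤ (Fin N →₀ ℤ) v) := by
    rw [← LinearMap.ker_eq_bot]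
    exact LinearMap.ker_toSpanSingleton ℤ hv
  have e1 : ℤ ≃ₗ[ℤ] (Submodule.span ℤ ({v} : Set (Fin N →₀ ℤ))) :=
    (LinearEquiv.ofInjective _ hinj).trans
      (LinearEquiv.ofEq _ _ (LinearMap.span_singleton_eq_range ℤ _ v).symm)
  have hrank : nn = 1 := by
    have h1 := Module.finrank_eq_card_basis snf.bN
    have h2 : Module.finrank ℤ (Submodule.span ℤ ({v} : Set (Fin N →₀ ℤ))) = 1 := by
      rw [← e1.finrank_eq, Module.finrank_self]
    rw [h2, Fintype.card_fin] at h1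
    exact h1.symm
  subst hrank
  set i0 : Fin N := snf.f 0 with hi0
  have hb : (snf.bN 0 : Fin N →₀ ℤ) = snf.a 0 • snf.bM i0 := snf.snf 0
  have hvmem : v ∈ Submodule.span ℤ ({v} : Set (Fin N →₀ ℤ)) :=
    Submodule.mem_span_singleton_self v
  have hsum := snf.bN.sum_repr ⟨v, hvmem⟩
  rw [Fin.sum_univ_one] at hsum
  set c0 : ℤ := snf.bN.repr ⟨v, hvmem⟩ 0 with hc0
  set d : ℤ := c0 * snf.a 0 with hdd
  have hv' : v = d • snf.bM i0 := by
    have h3 := congrArg Subtype.val hsum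
    rw [Submodule.coe_smul, hb, smul_smul] at h3
    exact h3.symm
  have hd : d ≠ 0 := fun h => hv (by rw [hv', h, zero_smul])
  set ψ : (Fin N →₀ ℤ) ≃+ (Fin N →₀ ℤ) := snf.bM.repr.toAddEquiv with hψ
  have h4 : snf.bM.repr (d • snf.bM i0) = Finsupp.single i0 d := by
    rw [map_smul, Module.Basis.repr_self, Finsupp.smul_single, smul_eq_mul, mul_one]
  have hψv : ψ v = Finsupp.single i0 d := (congrArg (⇑snf.bM.repr) hv').trans h4
  set e : LaurentMv ℂ N ≃ₐ[ℂ] LaurentMv ℂ N := AddMonoidAlgebra.domCongr ℂ ℂ ψ with he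
  set p' : LaurentMv ℂ N := e p with hp'def
  have hp' : Irreducible p' := irreducible_map_mulEquiv (e.toRingEquiv.toMulEquiv) hp
  have hdvd' : p' ∣ (AddMonoidAlgebra.single (Finsupp.single i0 d) 1
      - AddMonoidAlgebra.single 0 ω₀ : LaurentMv ℂ N) := by
    have h2 : e (AddMonoidAlgebra.single v 1 - AddMonoidAlgebra.single 0 ω₀)
        = AddMonoidAlgebra.single (Finsupp.single i0 d) 1
          - AddMonoidAlgebra.single 0 ω₀ := by
      rw [map_sub, he, AddMonoidAlgebra.domCongr_single, AddMonoidAlgebra.domCongr_single,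
        hψv, map_zero]
    exact h2 ▸ map_dvd e hdvd
  -- normalize sign of d
  obtain ⟨d0, hd0, ω₁, m₁, hm₁, hω₁, hdvd₁⟩ :
      ∃ (d0 : ℕ), 0 < d0 ∧ ∃ (ω₁ : ℂ) (m₁ : ℕ), 0 < m₁ ∧ ω₁ ^ m₁ = 1 ∧
        p' ∣ (AddMonoidAlgebra.single (Finsupp.single i0 (d0 : ℤ)) 1
          - AddMonoidAlgebra.single 0 ω₁ : LaurentMv ℂ N) := by
    rcases lt_or_gt_of_ne hd with hneg | hpos
    · refine ⟨(-d).toNat, by omega, ω₀⁻¹, m₀, hm₀, by rw [inv_pow, hω₀, inv_one], ?_⟩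
      have hflip := flip_eq (Finsupp.single i0 d) ω₀ hω0ne
      have hcast : -(Finsupp.single i0 d) = Finsupp.single i0 (((-d).toNat : ℕ) : ℤ) := by
        rw [← Finsupp.single_neg]
        congr 1
        omega
      rw [hcast] at hflip
      obtain ⟨U, hU⟩ := aux_single_isUnit (Finsupp.single i0 d) (-ω₀) (neg_ne_zero.mpr hω0ne)
      rw [hflip] at hdvd'
      obtain ⟨cc, hcc⟩ := hdvd'
      rw [← hU] at hcc
      refine ⟨((U⁻¹ : (LaurentMv ℂ N)ˣ) : LaurentMv ℂ N) * cc, ?_⟩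
      have h6 : ((U⁻¹ : (LaurentMv ℂ N)ˣ) : LaurentMv ℂ N) * ((U : LaurentMv ℂ N)
            * (AddMonoidAlgebra.single (Finsupp.single i0 (((-d).toNat : ℕ) : ℤ)) 1
              - AddMonoidAlgebra.single 0 ω₀⁻¹))
          = ((U⁻¹ : (LaurentMv ℂ N)ˣ) : LaurentMv ℂ N) * (p' * cc) := by rw [hcc]
      rw [← mul_assoc, Units.inv_mul, one_mul] at h6
      rw [h6, mul_left_comm]
    · refine ⟨d.toNat, by omega, ω₀, m₀, hm₀, hω₀, ?_⟩
      rwa [show ((d.toNat : ℕ) : ℤ) = d by omega]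
  -- factor X^{d0 e_{i0}} - ω₁ into linear factors
  set x : LaurentMv ℂ N := AddMonoidAlgebra.single (Finsupp.single i0 1) 1 with hx
  set P : Polynomial ℂ := Polynomial.X ^ d0 - Polynomial.C ω₁ with hP
  have hPm : P.Monic := Polynomial.monic_X_pow_sub_C ω₁ hd0.ne'
  have hPsplits : Polynomial.Splits P := IsAlgClosed.splits P
  have hPfact := hPsplits.eq_prod_roots_of_monic hPm
  have hgoal : (AddMonoidAlgebra.single (Finsupp.single i0 (d0 : ℤ)) 1
      - AddMonoidAlgebra.single 0 ω₁ : LaurentMv ℂ N) = Polynomial.aeval x P := by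
    rw [hP, map_sub, map_pow, Polynomial.aeval_X, Polynomial.aeval_C, hx,
      AddMonoidAlgebra.single_pow, one_pow]
    congr 2
    rw [Finsupp.smul_single]
    congr 1
    simp
  set s : Multiset (LaurentMv ℂ N) :=
    P.roots.map (fun r => x - AddMonoidAlgebra.single 0 r) with hs
  have hprod : Polynomial.aeval x P = s.prod := by
    conv_lhs => rw [hPfact]
    rw [map_multiset_prod, Multiset.map_map, hs]
    congr 1
    apply Multiset.map_congr rfl
    intro r hr
    simp only [Function.comp_apply, map_sub, Polynomial.aeval_X, Polynomial.aeval_C]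
    rfl
  have hω₁ne : ω₁ ≠ 0 := by
    intro h
    rw [h, zero_pow hm₁.ne'] at hω₁
    exact zero_ne_one hω₁
  have hroots : ∀ r ∈ P.roots, r ^ d0 = ω₁ ∧ r ≠ 0 := by
    intro r hr
    have h2 : P.eval r = 0 := (Polynomial.mem_roots'.mp hr).2
    rw [hP, Polynomial.eval_sub, Polynomial.eval_pow, Polynomial.eval_X, Polynomial.eval_C,
      sub_eq_zero] at h2
    exact ⟨h2, fun h0 => hω₁ne (by rw [← h2, h0, zero_pow hd0.ne'])⟩
  have hprimes : ∀ q ∈ s, Prime q := by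
    intro q hq
    obtain ⟨r, hr, rfl⟩ := Multiset.mem_map.mp hq
    exact prime_q i0 r (hroots r hr).2
  have hps : p' ∣ s.prod := by
    rw [← hprod, ← hgoal]
    exact hdvd₁
  haveI : IsDomain (LaurentMv ℂ N) := NoZeroDivisors.to_isDomain _
  obtain ⟨qq, hqmem, hassoc⟩ := irred_dvd_prod hp' s hprimes hps
  obtain ⟨r, hrmem, rfl⟩ := Multiset.mem_map.mp hqmem
  obtain ⟨U, hU⟩ := hassoc
  have hp_eq : p = e.symm ((x - AddMonoidAlgebra.single 0 r)
      * ((U⁻¹ : (LaurentMv ℂ N)ˣ) : LaurentMv ℂ N)) := by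
    apply e.injective
    rw [AlgEquiv.apply_symm_apply, ← hp'def, ← hU, Units.mul_inv_cancel_right]
  have hUu : IsUnit (e.symm ((U⁻¹ : (LaurentMv ℂ N)ˣ) : LaurentMv ℂ N)) :=
    (Units.isUnit U⁻¹).map e.symm.toAlgHom
  obtain ⟨U', hU'⟩ := hUu
  have hsymm : e.symm ((x : LaurentMv ℂ N) - AddMonoidAlgebra.single 0 r)
      = AddMonoidAlgebra.single (ψ.symm (Finsupp.single i0 1)) 1
        - AddMonoidAlgebra.single 0 r := by
    rw [map_sub, he, AddMonoidAlgebra.domCongr_symm, hx, AddMonoidAlgebra.domCongr_single,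
      AddMonoidAlgebra.domCongr_single, map_zero]
  refine ⟨U', ψ.symm (Finsupp.single i0 1), r, d0 * m₁, ?_, Nat.mul_pos hd0 hm₁, ?_, ?_⟩
  · intro h
    have h2 : (Finsupp.single i0 1 : Fin N →₀ ℤ) = 0 := by
      have := congrArg ψ h
      rwa [AddEquiv.apply_symm_apply, map_zero] at this
    exact one_ne_zero (Finsupp.single_eq_zero.mp h2)
  · rw [pow_mul, (hroots r hrmem).1, hω₁]
  · rw [hU', hp_eq, map_mul, hsymm, mul_comm]

end CCnDAHA
end

section
/- Let A be the Laurent polynomial ring over ℂ in N ≥ 1 variables, let v ∈ ℤ^N be a primitive vector (the gcd of its entries is 1), and let ω ∈ ℂ be a primitive ℓ-th root of unity. Then s = X^v − ω is irreducible in A, and if s divides X^{v'} − 1 in A for some v' ∈ ℤ^N, then v' = ℓ·m·v for some integer m. -/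
open scoped Classical

namespace CCnDAHA

variable {n : ℕ}




private lemma bezout_finset {ι : Type*} [DecidableEq ι] (f : ι → ℤ) (s : Finset ι) :
    ∃ u : ι → ℤ, ∑ i ∈ s, u i * f i = s.gcd f := by
  induction s using Finset.induction_on with
  | empty => exact ⟨0, by simp⟩
  | insert a t hat ih =>
    obtain ⟨u, hu⟩ := ih
    set x := Int.gcdA (f a) (t.gcd f)
    set y := Int.gcdB (f a) (t.gcd f)
    refine ⟨fun i => if i = a then x else y * u i, ?_⟩
    rw [Finset.sum_insert hat]
    have h1 : ∑ i ∈ t, (if i = a then x else y * u i) * f i = y * ∑ i ∈ t, u i * f i := by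
      rw [Finset.mul_sum]
      refine Finset.sum_congr rfl fun i hi => ?_
      rw [if_neg (by rintro rfl; exact hat hi)]; ring
    rw [h1, hu]
    show (if a = a then x else y * u a) * f a + _ = _
    rw [if_pos rfl, Finset.gcd_insert, ← Int.coe_gcd, Int.gcd_eq_gcd_ab]
    ring

private lemma sub_dvd_zpow_sub_zpow {R : Type*} [CommRing R] (a b : Rˣ) (k : ℤ) :
    ((a : R) - b) ∣ ((a ^ k : Rˣ) : R) - ((b ^ k : Rˣ) : R) := by
  obtain ⟨n, rfl | rfl⟩ := Int.eq_nat_or_neg k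
  · have := sub_dvd_pow_sub_pow (a : R) (b : R) n
    simpa [zpow_natCast, Units.val_pow_eq_pow_val] using this
  · set X : R := ((a ^ (-(n:ℤ)) : Rˣ) : R) with hX
    set Y : R := ((b ^ (-(n:ℤ)) : Rˣ) : R) with hY
    have h1 : ((a:R))^n * X = 1 := by
      rw [hX, ← Units.val_pow_eq_pow_val, ← Units.val_mul, ← zpow_natCast, ← zpow_add]
      simp
    have h2 : ((b:R))^n * Y = 1 := by
      rw [hY, ← Units.val_pow_eq_pow_val, ← Units.val_mul, ← zpow_natCast, ← zpow_add]
      simp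
    have key : X - Y = ((b:R)^n - (a:R)^n) * (X * Y) := by
      linear_combination (-X) * h2 + Y * h1
    rw [key]
    exact Dvd.dvd.mul_right (dvd_sub_comm.mp (sub_dvd_pow_sub_pow (a:R) (b:R) n)) _

/-- for v primitive and ω a primitive ℓ-th root of unity, s = X^v − ω is
irreducible in ℂ[x_1^{±1},…,x_N^{±1}], and s ∣ X^{v'} − 1 implies v' = ℓ·m·v for some m ∈ ℤ. -/
theorem stmt1 (N : ℕ) (hN : 1 ≤ N) (v : Fin N →₀ ℤ)
    (hv : Finset.univ.gcd (fun i => v i) = 1)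
    (ℓ : ℕ) (hℓ : 0 < ℓ) (ω : ℂ) (hω : IsPrimitiveRoot ω ℓ) :
    Irreducible ((AddMonoidAlgebra.single v 1 - AddMonoidAlgebra.single 0 ω : LaurentMv ℂ N)) ∧
    ∀ v' : Fin N →₀ ℤ,
      ((AddMonoidAlgebra.single v 1 - AddMonoidAlgebra.single 0 ω : LaurentMv ℂ N) ∣
        (AddMonoidAlgebra.single v' 1 - AddMonoidAlgebra.single 0 1)) →
      ∃ m : ℤ, v' = ((ℓ : ℤ) * m) • v := by
  classical
  -- Bezout functional
  obtain ⟨u, hu⟩ := bezout_finset (fun i => v i) Finset.univ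
  rw [hv] at hu
  set A := LaurentMv ℂ N with hA
  set L : (Fin N →₀ ℤ) → ℤ := fun w => ∑ i, u i * w i with hLdef
  have hω0 : ω ≠ 0 := hω.ne_zero hℓ.ne'
  haveI : IsDomain A := NoZeroDivisors.to_isDomain A
  have hL0 : L 0 = 0 := by simp [hLdef]
  have hLadd : ∀ w w' : Fin N →₀ ℤ, L (w + w') = L w + L w' := by
    intro w w'
    simp [hLdef, Finsupp.add_apply, mul_add, Finset.sum_add_distrib]
  have hLv : L v = 1 := hu
  -- the evaluation homomorphism
  set F : Multiplicative (Fin N →₀ ℤ) →* A :=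
    { toFun := fun w =>
        AddMonoidAlgebra.single (Multiplicative.toAdd w - L (Multiplicative.toAdd w) • v)
          (ω ^ L (Multiplicative.toAdd w)),
      map_one' := by
        show AddMonoidAlgebra.single _ _ = (1 : A)
        rw [AddMonoidAlgebra.one_def]
        simp [hL0],
      map_mul' := by
        intro w w'
        show AddMonoidAlgebra.single _ _ = AddMonoidAlgebra.single _ _ * AddMonoidAlgebra.single _ _
        rw [AddMonoidAlgebra.single_mul_single]
        have ht : Multiplicative.toAdd (w * w') =
            Multiplicative.toAdd w + Multiplicative.toAdd w' := rfl
        rw [ht, hLadd]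
        congr 1
        · rw [add_smul]; abel
        · rw [zpow_add₀ hω0] } with hF
  set π : A →ₐ[ℂ] A := AddMonoidAlgebra.lift ℂ A (Fin N →₀ ℤ) F with hπdef
  have hπ : ∀ (w : Fin N →₀ ℤ) (c : ℂ),
      π (AddMonoidAlgebra.single w c)
        = AddMonoidAlgebra.single (w - L w • v) (c * ω ^ L w) := by
    intro w c
    rw [hπdef, AddMonoidAlgebra.lift_single]
    show c • AddMonoidAlgebra.single _ _ = _
    rw [AddMonoidAlgebra.smul_single, smul_eq_mul]
    rfl
  set s : A := AddMonoidAlgebra.single v 1 - AddMonoidAlgebra.single 0 ω with hs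
  have hπs : π s = 0 := by
    rw [hs, map_sub, hπ, hπ, hLv, hL0]
    simp
  -- units
  set U : Aˣ := (AddMonoidAlgebra.of ℂ (Fin N →₀ ℤ)).toHomUnits (Multiplicative.ofAdd v) with hUdef
  have hU : ∀ k : ℤ, ((U ^ k : Aˣ) : A) = AddMonoidAlgebra.single (k • v) 1 := by
    intro k
    rw [hUdef, ← map_zpow, MonoidHom.coe_toHomUnits]
    have : (Multiplicative.ofAdd v) ^ k = Multiplicative.ofAdd (k • v) := by
      rw [← ofAdd_zsmul]
    rw [this, AddMonoidAlgebra.of_apply]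
    rfl
  set wU : ℂˣ := (hω.isUnit hℓ.ne').unit with hwU
  set W : Aˣ := Units.map (algebraMap ℂ A).toMonoidHom wU with hWdef
  have hW : ∀ k : ℤ, ((W ^ k : Aˣ) : A) = AddMonoidAlgebra.single 0 (ω ^ k) := by
    intro k
    rw [hWdef, ← map_zpow]
    show algebraMap ℂ A ((wU ^ k : ℂˣ) : ℂ) = _
    rw [Units.val_zpow_eq_zpow_val, hwU, IsUnit.unit_spec]
    rfl
  have hUW : ((U : A) - (W : A)) = s := by
    have h1 : (U : A) = AddMonoidAlgebra.single v 1 := by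
      have := hU 1; simpa using this
    have h2 : (W : A) = AddMonoidAlgebra.single 0 ω := by
      have := hW 1; simpa using this
    rw [h1, h2, hs]
  have hsd : ∀ k : ℤ, s ∣ AddMonoidAlgebra.single (k • v) (1:ℂ)
      - AddMonoidAlgebra.single 0 (ω ^ k) := by
    intro k
    rw [← hU k, ← hW k, ← hUW]
    exact sub_dvd_zpow_sub_zpow U W k
  have hdvd1 : ∀ (w : Fin N →₀ ℤ) (c : ℂ),
      s ∣ AddMonoidAlgebra.single w c - π (AddMonoidAlgebra.single w c) := by
    intro w c
    rw [hπ]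
    have hfac : AddMonoidAlgebra.single w c
        - AddMonoidAlgebra.single (w - L w • v) (c * ω ^ L w)
        = AddMonoidAlgebra.single (w - L w • v) c
          * (AddMonoidAlgebra.single (L w • v) (1:ℂ)
              - AddMonoidAlgebra.single 0 (ω ^ L w)) := by
      have e1 : w - L w • v + L w • v = w := by abel
      rw [mul_sub, AddMonoidAlgebra.single_mul_single, AddMonoidAlgebra.single_mul_single,
        e1, add_zero, mul_one]
    rw [hfac]
    exact (hsd (L w)).mul_left _
  have hdvd : ∀ f : A, s ∣ f - π f := by
    intro f
    have hrepr : ∑ w ∈ f.coeff.support, AddMonoidAlgebra.single w (f.coeff w) = f :=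
      AddMonoidAlgebra.sum_coeff_single f
    have hstep : f - π f
        = ∑ w ∈ f.coeff.support,
            (AddMonoidAlgebra.single w (f.coeff w) - π (AddMonoidAlgebra.single w (f.coeff w))) := by
      rw [Finset.sum_sub_distrib, ← map_sum, hrepr]
    rw [hstep]
    exact Finset.dvd_sum fun w _ => hdvd1 w (f.coeff w)
  have hker : ∀ f : A, π f = 0 → s ∣ f := by
    intro f h
    have := hdvd f
    rwa [h, sub_zero] at this
  have hker' : ∀ f : A, s ∣ f → π f = 0 := by
    rintro f ⟨g, rfl⟩
    rw [map_mul, hπs, zero_mul]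
  have hv0 : v ≠ 0 := by
    intro h
    rw [h] at hv
    have : Finset.univ.gcd (fun i => (0 : Fin N →₀ ℤ) i) = 0 :=
      Finset.gcd_eq_zero_iff.mpr (fun i _ => rfl)
    rw [this] at hv
    exact zero_ne_one hv
  have hs0 : s ≠ 0 := by
    intro h
    rw [hs, sub_eq_zero] at h
    rcases AddMonoidAlgebra.single_inj.mp h with ⟨h1, _⟩ | ⟨h1, _⟩
    · exact hv0 h1
    · exact one_ne_zero h1
  have hprime : Prime s := by
    refine ⟨hs0, ?_, ?_⟩
    · intro h
      have := h.map π
      rw [hπs] at this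
      exact not_isUnit_zero this
    · intro a b hab
      have h0 : π a * π b = 0 := by
        rw [← map_mul]; exact hker' _ hab
      rcases mul_eq_zero.mp h0 with h | h
      · exact Or.inl (hker _ h)
      · exact Or.inr (hker _ h)
  refine ⟨?_, ?_⟩
  · exact hprime.irreducible
  intro v' hdv
  have h0 := hker' _ hdv
  rw [map_sub, hπ, hπ, hL0, sub_eq_zero] at h0
  simp only [zero_smul, sub_zero, zpow_zero, mul_one, one_mul] at h0
  rcases AddMonoidAlgebra.single_inj.mp h0 with ⟨h1, h2⟩ | ⟨_, h2⟩
  · obtain ⟨m, hm⟩ := (hω.zpow_eq_one_iff_dvd (L v')).mp h2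
    refine ⟨m, ?_⟩
    rw [← hm]
    exact sub_eq_zero.mp h1
  · exact absurd h2 one_ne_zero


end CCnDAHA
end

section
/- Let n ≥ 2, let K be a field, and let q, t, a ∈ K^×. For λ ∈ ℤ^n define y(λ)_i = q^{λ_i}·t^{ρ(λ)_i}·a^{σ(λ)_i}. Suppose λ, μ ∈ ℤ^n satisfy λ ≠ μ and y(λ)_i = y(μ)_i for all 1 ≤ i ≤ n. Then either there exist integers α, β with 0 ≤ α ≤ n−1 and β ≥ 1 such that t^α q^β = 1, or there exist integers α, β with 0 ≤ α ≤ 2n−2 and β ≥ 1 such that t^α q^β a² = 1. -/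
open scoped Classical

namespace CCnDAHA

variable {n : ℕ}




/-- σ(λ)_i = +1 if λ_i ≥ 0, −1 otherwise. -/
def sgn (lam : Fin n → ℤ) (i : Fin n) : ℤ := if 0 ≤ lam i then 1 else -1

/-- `Prec lam i j` : index `i` strictly precedes `j` in the ordering i_1,…,i_n. -/
def Prec (lam : Fin n → ℤ) (i j : Fin n) : Prop :=
  |lam j| < |lam i| ∨
    (|lam i| = |lam j| ∧
      ((0 ≤ lam i ∧ lam j < 0) ∨
       (0 ≤ lam i ∧ 0 ≤ lam j ∧ i < j) ∨
       (lam i < 0 ∧ lam j < 0 ∧ j < i)))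

/-- 0-based position of index `i` in the ordering i_1,…,i_n (position m−1). -/
noncomputable def posOf (lam : Fin n → ℤ) (i : Fin n) : ℕ :=
  (Finset.univ.filter (fun j => Prec lam j i)).card

/-- ρ(λ)_i = σ(λ)_i · (n − m) where i = i_m. -/
noncomputable def rho (lam : Fin n → ℤ) (i : Fin n) : ℤ :=
  sgn lam i * ((n : ℤ) - 1 - (posOf lam i : ℤ))

/-- (a,b)-neighborhood. -/
noncomputable def IsNbhd (a b : ℤ) (lam : Fin n → ℤ) (i j : Fin n) : Prop :=
  |rho lam i| - |rho lam j| = a - 1 ∧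
  |lam i| - |lam j| ≤ b ∧
  (|lam i| - |lam j| = b →
    ((0 ≤ lam i ∧ 0 ≤ lam j ∧ j < i) ∨
     (lam i < 0 ∧ lam j < 0 ∧ i < j) ∨
     (lam i < 0 ∧ 0 ≤ lam j)))

/-- (a,b)-admissible: no (a,b)-neighborhood. -/
noncomputable def Admissible (a b : ℤ) (lam : Fin n → ℤ) : Prop :=
  ∀ i j, ¬ IsNbhd a b lam i j

/-- number of (a,b)-neighborhoods. -/
noncomputable def nbhdCount (a b : ℤ) (lam : Fin n → ℤ) : ℕ :=
  ((Finset.univ : Finset (Fin n × Fin n)).filter (fun p => IsNbhd a b lam p.1 p.2)).card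

/-- dot action of the affine simple reflection s_i (0 ≤ i ≤ n, 1-based paper indexing). -/
noncomputable def dotAct (i : ℕ) (lam : Fin n → ℤ) : Fin n → ℤ := fun j =>
  if i = 0 then (if (j : ℕ) = 0 then -1 - lam j else lam j)
  else if i = n then (if (j : ℕ) + 1 = n then -lam j else lam j)
  else if h1 : (j : ℕ) + 1 = i ∧ i < n then lam ⟨(j : ℕ) + 1, by omega⟩
  else if h2 : (j : ℕ) = i then lam ⟨(j : ℕ) - 1, by have := j.isLt; omega⟩
  else lam j

/-- pairing ⟨λ, α_i⟩, for 0 ≤ i ≤ n. -/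
noncomputable def pairing (i : ℕ) (lam : Fin n → ℤ) : ℤ :=
  if hn : n = 0 then 0
  else if i = 0 then -2 * lam ⟨0, by omega⟩
  else if i = n then 2 * lam ⟨n - 1, by omega⟩
  else lam ⟨(i - 1) % n, Nat.mod_lt _ (by omega)⟩ - lam ⟨i % n, Nat.mod_lt _ (by omega)⟩

/-- partial sum λ_1 + ⋯ + λ_j. -/
def psum (lam : Fin n → ℤ) (j : Fin n) : ℤ :=
  ∑ i ∈ Finset.univ.filter (fun i => i ≤ j), lam i

/-- dominance order: μ ≤ λ. -/
def DomLE (mu lam : Fin n → ℤ) : Prop := ∀ j, psum mu j ≤ psum lam j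

/-- λ⁺ : the weakly decreasing rearrangement of (|λ_1|,…,|λ_n|). -/
noncomputable def lamPlus (lam : Fin n → ℤ) : Fin n → ℤ := fun j =>
  ((Multiset.sort (Multiset.map (fun i => |lam i|) Finset.univ.val) (· ≤ ·)).reverse).getD (j : ℕ) 0

/-- λ ≻ μ. -/
noncomputable def SuccOrd (lam mu : Fin n → ℤ) : Prop :=
  (DomLE (lamPlus mu) (lamPlus lam) ∧ lamPlus lam ≠ lamPlus mu) ∨
  (lamPlus lam = lamPlus mu ∧ DomLE mu lam ∧ lam ≠ mu)

/-- |λ_{i_m}|, with the sentinel value 0 at m = n+1. -/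
noncomputable def absAt (lam : Fin n → ℤ) (m : ℕ) : ℤ :=
  if m = n + 1 then 0
  else ∑ i ∈ Finset.univ.filter (fun i => posOf lam i + 1 = m), |lam i|

/-- σ(λ)_{i_m}, with sentinel value +1 at m = n+1. -/
noncomputable def sgAt (lam : Fin n → ℤ) (m : ℕ) : ℤ :=
  if m = n + 1 then 1
  else ∑ i ∈ Finset.univ.filter (fun i => posOf lam i + 1 = m), sgn lam i

/-- the (1-based) value of the index i_m, with sentinel value n+1 at m = n+1. -/
noncomputable def ixAt (lam : Fin n → ℤ) (m : ℕ) : ℕ :=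
  if m = n + 1 then n + 1
  else ∑ i ∈ Finset.univ.filter (fun i => posOf lam i + 1 = m), ((i : ℕ) + 1)

/-- β_m ∈ {0,1}. -/
noncomputable def betaAt (lam : Fin n → ℤ) (m : ℕ) : ℤ :=
  if (sgAt lam m = 1 ∧ sgAt lam (m + 1) = 1 ∧ ixAt lam (m + 1) < ixAt lam m) ∨
     (sgAt lam m = -1 ∧ sgAt lam (m + 1) = -1 ∧ ixAt lam m < ixAt lam (m + 1)) ∨
     (sgAt lam m = -1 ∧ sgAt lam (m + 1) = 1)
  then 1 else 0

/-- p_m = ⌊(|λ_{i_m}| − |λ_{i_{m+1}}| − β_m)/b⌋ (b plays the role of r−1). -/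
noncomputable def pAt (b : ℤ) (lam : Fin n → ℤ) (m : ℕ) : ℤ :=
  Int.fdiv (absAt lam m - absAt lam (m + 1) - betaAt lam m) b

/-- the b-quotient λ^{quot} (b plays the role of r−1): j-th entry is p_j + ⋯ + p_n
(1-based j = (j:Fin n) + 1). -/
noncomputable def quotOf (b : ℤ) (lam : Fin n → ℤ) : Fin n → ℤ := fun j =>
  ∑ m ∈ Finset.Icc ((j : ℕ) + 1) n, pAt b lam m

/-- fundamental weight ϖ_j (1-based j = (j : Fin n)+1): first j entries 1, rest 0. -/
def varpi (j : Fin n) : Fin n → ℤ := fun i => if i ≤ j then 1 else 0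



/-- key for comparing in the tie-break -/
def cKey (lam : Fin n → ℤ) (i : Fin n) : ℤ := sgn lam i * ((n : ℤ) - (i : ℕ))

lemma prec_iff (lam : Fin n → ℤ) (j i : Fin n) :
    Prec lam j i ↔ |lam i| < |lam j| ∨ (|lam j| = |lam i| ∧ cKey lam i < cKey lam j) := by
  have hi := i.isLt
  have hj := j.isLt
  unfold Prec cKey sgn
  simp only [Fin.lt_def]
  by_cases h1 : 0 ≤ lam i <;> by_cases h2 : 0 ≤ lam j <;>
    simp only [h1, h2, if_true, if_false, ite_true, ite_false, eq_self_iff_true, not_le,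
      true_and, and_true, false_and, and_false, or_false, false_or, true_or, or_true] <;>
    omega

lemma prec_irrefl (lam : Fin n → ℤ) (i : Fin n) : ¬ Prec lam i i := by
  rw [prec_iff]; omega

lemma prec_trans (lam : Fin n → ℤ) {i j k : Fin n}
    (h1 : Prec lam i j) (h2 : Prec lam j k) : Prec lam i k := by
  rw [prec_iff] at *; omega

lemma posOf_lt_of_prec (lam : Fin n → ℤ) {j i : Fin n} (h : Prec lam j i) :
    posOf lam j < posOf lam i := by
  apply Finset.card_lt_card
  constructor
  · intro k hk
    simp only [Finset.mem_filter, Finset.mem_univ, true_and] at *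
    exact prec_trans lam hk h
  · intro hsub
    have hj : j ∈ Finset.univ.filter (fun k => Prec lam k i) := by
      simp only [Finset.mem_filter, Finset.mem_univ, true_and]; exact h
    have := hsub hj
    simp only [Finset.mem_filter, Finset.mem_univ, true_and] at this
    exact prec_irrefl lam j this

lemma posOf_lt (lam : Fin n → ℤ) (i : Fin n) : posOf lam i < n := by
  have hsub : Finset.univ.filter (fun j => Prec lam j i) ⊆ Finset.univ.erase i := by
    intro j hj
    simp only [Finset.mem_filter, Finset.mem_univ, true_and] at hj
    apply Finset.mem_erase.2
    refine ⟨?_, Finset.mem_univ j⟩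
    exact fun h => prec_irrefl lam i (by rwa [h] at hj)
  have := Finset.card_le_card hsub
  rw [Finset.card_erase_of_mem (Finset.mem_univ i), Finset.card_univ, Fintype.card_fin] at this
  have hn : 0 < n := i.pos
  unfold posOf
  omega

lemma rel_aux {K : Type*} [Field K] {q t a : K} (hq : q ≠ 0) (ht : t ≠ 0) (ha : a ≠ 0)
    {x1 y1 z1 x2 y2 z2 : ℤ}
    (h : q ^ x1 * t ^ y1 * a ^ z1 = q ^ x2 * t ^ y2 * a ^ z2) :
    q ^ (x1 - x2) * t ^ (y1 - y2) * a ^ (z1 - z2) = 1 := by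
  rw [zpow_sub₀ hq, zpow_sub₀ ht, zpow_sub₀ ha]
  have h2 : q ^ x2 * t ^ y2 * a ^ z2 ≠ 0 :=
    mul_ne_zero (mul_ne_zero (zpow_ne_zero _ hq) (zpow_ne_zero _ ht)) (zpow_ne_zero _ ha)
  field_simp
  linear_combination h

/-- sgn equality means nonnegativity agrees -/
lemma nonneg_iff_of_sgn_eq {lam mu : Fin n → ℤ} {i : Fin n} (h : sgn lam i = sgn mu i) :
    (0 ≤ lam i ↔ 0 ≤ mu i) := by
  unfold sgn at h
  by_cases h1 : 0 ≤ lam i <;> by_cases h2 : 0 ≤ mu i <;> simp [h1, h2] at h ⊢ <;> omega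

lemma abs_ne_of_sgn_eq {lam mu : Fin n → ℤ} {i : Fin n} (hs : sgn lam i = sgn mu i)
    (hne : lam i ≠ mu i) : |lam i| ≠ |mu i| := by
  have := nonneg_iff_of_sgn_eq hs
  rcases abs_cases (lam i) with ⟨e1, _⟩ | ⟨e1, _⟩ <;>
    rcases abs_cases (mu i) with ⟨e2, _⟩ | ⟨e2, _⟩ <;> omega

/-- Case A: some sign differs -/
lemma caseA {K : Type*} [Field K] {q t a : K} (hq : q ≠ 0) (ht : t ≠ 0) (ha : a ≠ 0)
    (lam mu : Fin n → ℤ) (i : Fin n) (h1 : 0 ≤ lam i) (h2 : mu i < 0)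
    (hy : q ^ (lam i) * t ^ (rho lam i) * a ^ (sgn lam i)
        = q ^ (mu i) * t ^ (rho mu i) * a ^ (sgn mu i)) :
    ∃ α β : ℤ, 0 ≤ α ∧ α ≤ 2 * (n : ℤ) - 2 ∧ 1 ≤ β ∧ t ^ α * q ^ β * a ^ (2 : ℤ) = 1 := by
  have hrel := rel_aux hq ht ha hy
  have hs1 : sgn lam i = 1 := by unfold sgn; simp [h1]
  have hs2 : sgn mu i = -1 := by unfold sgn; simp [not_le.2 h2]
  have hp1 : posOf lam i < n := posOf_lt lam i
  have hp2 : posOf mu i < n := posOf_lt mu i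
  refine ⟨rho lam i - rho mu i, lam i - mu i, ?_, ?_, by omega, ?_⟩
  · rw [rho, rho, hs1, hs2]; omega
  · rw [rho, rho, hs1, hs2]; omega
  · rw [hs1, hs2] at hrel
    norm_num at hrel
    calc t ^ (rho lam i - rho mu i) * q ^ (lam i - mu i) * a ^ (2:ℤ)
        = q ^ (lam i - mu i) * t ^ (rho lam i - rho mu i) * a ^ (2:ℤ) := by ring
      _ = 1 := by exact_mod_cast hrel

/-- Case B core: with all signs equal and a well-chosen index, positions compare. -/
lemma caseB_pos (lam mu : Fin n → ℤ) (hσ : ∀ k, sgn lam k = sgn mu k) (i : Fin n)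
    (habs : |mu i| < |lam i|)
    (hmax : ∀ j, lam j ≠ mu j → max |lam j| |mu j| ≤ |lam i|)
    (hmin : ∀ j, lam j ≠ mu j → |lam j| = |lam i| → posOf lam i ≤ posOf lam j) :
    posOf lam i ≤ posOf mu i := by
  apply Finset.card_le_card
  intro j hj
  simp only [Finset.mem_filter, Finset.mem_univ, true_and] at hj ⊢
  have hc : cKey mu = cKey lam := by
    funext k; unfold cKey; rw [hσ k]
  rw [prec_iff] at hj ⊢
  rw [hc]
  by_cases hdiff : lam j = mu j
  · rcases hj with h | ⟨h, h'⟩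
    · left; rw [← hdiff]; omega
    · left; rw [← hdiff]; omega
  · exfalso
    have hm := hmax j hdiff
    rcases hj with h | ⟨h, h'⟩
    · omega
    · have h1 := hmin j hdiff h
      have h2 : Prec lam j i := by rw [prec_iff]; right; exact ⟨h, h'⟩
      have := posOf_lt_of_prec lam h2
      omega

/-- Case B main -/
lemma caseBmain {K : Type*} [Field K] {q t a : K} (hq : q ≠ 0) (ht : t ≠ 0) (ha : a ≠ 0)
    (lam mu : Fin n → ℤ) (hσ : ∀ k, sgn lam k = sgn mu k)
    (i0 : Fin n) (hd0 : lam i0 ≠ mu i0) (habs0 : |mu i0| < |lam i0|)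
    (hmax : ∀ j, lam j ≠ mu j → max |lam j| |mu j| ≤ |lam i0|)
    (hy : ∀ i, q ^ (lam i) * t ^ (rho lam i) * a ^ (sgn lam i)
            = q ^ (mu i) * t ^ (rho mu i) * a ^ (sgn mu i)) :
    ∃ α β : ℤ, 0 ≤ α ∧ α ≤ (n : ℤ) - 1 ∧ 1 ≤ β ∧ t ^ α * q ^ β = 1 := by
  classical
  set S := Finset.univ.filter (fun j => lam j ≠ mu j ∧ |lam j| = |lam i0|) with hS
  have hi0S : i0 ∈ S := by simp [hS, hd0]
  obtain ⟨i, hiS, hminPos⟩ := S.exists_min_image (posOf lam) ⟨i0, hi0S⟩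
  simp only [hS, Finset.mem_filter, Finset.mem_univ, true_and] at hiS
  obtain ⟨hdiff, habsEq⟩ := hiS
  have habs : |mu i| < |lam i| := by
    have h1 := hmax i hdiff
    have h2 := abs_ne_of_sgn_eq (hσ i) hdiff
    omega
  have hpos : posOf lam i ≤ posOf mu i := by
    apply caseB_pos lam mu hσ i habs
    · intro j hj; have := hmax j hj; omega
    · intro j hj hje
      exact hminPos j (by simp [hS, hj, hje, habsEq])
  have hrel := rel_aux hq ht ha (hy i)
  have hp1 : posOf lam i < n := posOf_lt lam i
  have hp2 : posOf mu i < n := posOf_lt mu i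
  rw [hσ i, sub_self, zpow_zero, mul_one] at hrel
  by_cases hsg : 0 ≤ lam i
  · have hsg' : 0 ≤ mu i := (nonneg_iff_of_sgn_eq (hσ i)).1 hsg
    have hs1 : sgn lam i = 1 := by unfold sgn; simp [hsg]
    have hs2 : sgn mu i = 1 := by unfold sgn; simp [hsg']
    have hd : 1 ≤ lam i - mu i := by
      rw [abs_of_nonneg hsg, abs_of_nonneg hsg'] at habs; omega
    refine ⟨rho lam i - rho mu i, lam i - mu i, ?_, ?_, hd, ?_⟩
    · rw [rho, rho, hs1, hs2]; omega
    · rw [rho, rho, hs1, hs2]; omega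
    · calc t ^ (rho lam i - rho mu i) * q ^ (lam i - mu i)
          = q ^ (lam i - mu i) * t ^ (rho lam i - rho mu i) := by ring
        _ = 1 := hrel
  · have hsg' : ¬ 0 ≤ mu i := fun h => hsg ((nonneg_iff_of_sgn_eq (hσ i)).2 h)
    have hs1 : sgn lam i = -1 := by unfold sgn; simp [hsg]
    have hs2 : sgn mu i = -1 := by unfold sgn; simp [hsg']
    have hd : 1 ≤ mu i - lam i := by
      rw [abs_of_neg (not_le.1 hsg), abs_of_neg (not_le.1 hsg')] at habs; omega
    refine ⟨rho mu i - rho lam i, mu i - lam i, ?_, ?_, hd, ?_⟩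
    · rw [rho, rho, hs1, hs2]; omega
    · rw [rho, rho, hs1, hs2]; omega
    · have : q ^ (mu i - lam i) * t ^ (rho mu i - rho lam i)
          = (q ^ (lam i - mu i) * t ^ (rho lam i - rho mu i))⁻¹ := by
        rw [mul_inv, ← zpow_neg, ← zpow_neg, neg_sub, neg_sub]
      rw [hrel, inv_one] at this
      calc t ^ (rho mu i - rho lam i) * q ^ (mu i - lam i)
          = q ^ (mu i - lam i) * t ^ (rho mu i - rho lam i) := by ring
        _ = 1 := this


/-- if two Y-eigenvalue vectors coincide for λ ≠ μ, the parameters satisfy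
t^α q^β = 1 (0 ≤ α ≤ n−1, β ≥ 1) or t^α q^β a² = 1 (0 ≤ α ≤ 2n−2, β ≥ 1). -/
theorem stmt2 {K : Type*} [Field K] (n : ℕ) (hn : 2 ≤ n)
    (q t a : K) (hq : q ≠ 0) (ht : t ≠ 0) (ha : a ≠ 0)
    (lam mu : Fin n → ℤ) (hne : lam ≠ mu)
    (hy : ∀ i, q ^ (lam i) * t ^ (rho lam i) * a ^ (sgn lam i)
            = q ^ (mu i) * t ^ (rho mu i) * a ^ (sgn mu i)) :
    (∃ α β : ℤ, 0 ≤ α ∧ α ≤ (n : ℤ) - 1 ∧ 1 ≤ β ∧ t ^ α * q ^ β = 1) ∨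
    (∃ α β : ℤ, 0 ≤ α ∧ α ≤ 2 * (n : ℤ) - 2 ∧ 1 ≤ β ∧ t ^ α * q ^ β * a ^ (2 : ℤ) = 1) := by
  classical
  by_cases hσ : ∀ k, sgn lam k = sgn mu k
  · -- Case B
    left
    have hne' : ∃ i, lam i ≠ mu i := by
      by_contra h
      push_neg at h
      exact hne (funext h)
    obtain ⟨j0, hj0⟩ := hne'
    set D := Finset.univ.filter (fun j => lam j ≠ mu j) with hD
    have hj0D : j0 ∈ D := by simp [hD, hj0]
    obtain ⟨i0, hi0D, hmax0⟩ := D.exists_max_image (fun j => max |lam j| |mu j|) ⟨j0, hj0D⟩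
    simp only [hD, Finset.mem_filter, Finset.mem_univ, true_and] at hi0D
    have habsne := abs_ne_of_sgn_eq (hσ i0) hi0D
    have hmax0' : ∀ j, lam j ≠ mu j → max |lam j| |mu j| ≤ max |lam i0| |mu i0| := by
      intro j hj; exact hmax0 j (by simp [hD, hj])
    rcases lt_or_gt_of_ne habsne with hlt | hgt
    · -- |lam i0| < |mu i0| : swap roles
      exact caseBmain hq ht ha mu lam (fun k => (hσ k).symm) i0 (Ne.symm hi0D) hlt
        (fun j hj => by have := hmax0' j (Ne.symm hj); omega)
        (fun i => (hy i).symm)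
    · exact caseBmain hq ht ha lam mu hσ i0 hi0D hgt
        (fun j hj => by have := hmax0' j hj; omega) hy
  · -- Case A
    right
    push_neg at hσ
    obtain ⟨i, hi⟩ := hσ
    have := nonneg_iff_of_sgn_eq (lam := lam) (mu := mu) (i := i)
    by_cases h1 : 0 ≤ lam i
    · have h2 : mu i < 0 := by
        by_contra h
        push_neg at h
        exact hi (by unfold sgn; simp [h1, h])
      exact caseA hq ht ha lam mu i h1 h2 (hy i)
    · have h2 : 0 ≤ mu i := by
        by_contra h
        push_neg at h
        exact hi (by unfold sgn; simp [not_le.2 (not_le.1 h1), not_le.2 h])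
      exact caseA hq ht ha mu lam i h2 (not_le.1 h1) (hy i).symm

end CCnDAHA
end

section
/- Fix integers n ≥ 2, k, r with n ≥ k+1 ≥ 2 and r−1 ≥ 1. Let λ, μ ∈ ℤ^n be such that λ has at most one (k+1, r−1)-neighborhood, σ(λ)_i = σ(μ)_i for all i, and there exist integers m_1, …, m_n with λ_i = μ_i + (r−1)m_i and ρ(λ)_i = ρ(μ)_i + (k+1)m_i for all 1 ≤ i ≤ n. Then λ = μ. -/
open scoped Classical

namespace CCnDAHA

variable {n : ℕ}




def tb (lam : Fin n → ℤ) (i : Fin n) : ℤ :=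
  if 0 ≤ lam i then 2*(n:ℤ) - 1 - (i:ℤ) else (i:ℤ)

def Xv (lam : Fin n → ℤ) (i : Fin n) : ℤ := 2*(n:ℤ)*|lam i| + tb lam i

lemma tb_nonneg (lam : Fin n → ℤ) (i : Fin n) : 0 ≤ tb lam i := by
  have hi : (i:ℤ) < (n:ℤ) := by exact_mod_cast i.isLt
  have hi0 : (0:ℤ) ≤ i := by exact_mod_cast Nat.zero_le i.val
  unfold tb; split <;> omega

lemma tb_lt (lam : Fin n → ℤ) (i : Fin n) : tb lam i < 2*(n:ℤ) := by
  have hi : (i:ℤ) < (n:ℤ) := by exact_mod_cast i.isLt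
  have hi0 : (0:ℤ) ≤ i := by exact_mod_cast Nat.zero_le i.val
  unfold tb; split <;> omega

lemma tb_lt_iff (lam : Fin n → ℤ) (i j : Fin n) :
    ((0 ≤ lam i ∧ lam j < 0) ∨
       (0 ≤ lam i ∧ 0 ≤ lam j ∧ i < j) ∨
       (lam i < 0 ∧ lam j < 0 ∧ j < i)) ↔ tb lam j < tb lam i := by
  have hi : (i:ℤ) < (n:ℤ) := by exact_mod_cast i.isLt
  have hj : (j:ℤ) < (n:ℤ) := by exact_mod_cast j.isLt
  have hi0 : (0:ℤ) ≤ i := by exact_mod_cast Nat.zero_le i.val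
  have hj0 : (0:ℤ) ≤ j := by exact_mod_cast Nat.zero_le j.val
  have hij : i < j ↔ (i:ℤ) < (j:ℤ) := by
    rw [Fin.lt_def]; constructor <;> intro h <;> exact_mod_cast h
  have hji : j < i ↔ (j:ℤ) < (i:ℤ) := by
    rw [Fin.lt_def]; constructor <;> intro h <;> exact_mod_cast h
  by_cases h1 : 0 ≤ lam i <;> by_cases h2 : 0 ≤ lam j
  · simp only [tb, if_pos h1, if_pos h2]
    constructor
    · rintro (⟨_, hc⟩ | ⟨_, _, hc⟩ | ⟨hc, _, _⟩)
      · omega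
      · rw [hij] at hc; omega
      · omega
    · intro h
      refine Or.inr (Or.inl ⟨h1, h2, ?_⟩)
      rw [hij]; omega
  · simp only [tb, if_pos h1, if_neg h2]
    have h2' : lam j < 0 := not_le.mp h2
    constructor
    · intro _; omega
    · intro _; exact Or.inl ⟨h1, h2'⟩
  · simp only [tb, if_neg h1, if_pos h2]
    have h1' : lam i < 0 := not_le.mp h1
    constructor
    · rintro (⟨hc, _⟩ | ⟨hc, _⟩ | ⟨_, hc, _⟩)
      · exact absurd hc h1
      · exact absurd hc h1
      · omega
    · intro h; omega
  · simp only [tb, if_neg h1, if_neg h2]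
    have h1' : lam i < 0 := not_le.mp h1
    have h2' : lam j < 0 := not_le.mp h2
    constructor
    · rintro (⟨hc, _⟩ | ⟨hc, _⟩ | ⟨_, _, hc⟩)
      · exact absurd hc h1
      · exact absurd hc h1
      · rw [hji] at hc; omega
    · intro h
      refine Or.inr (Or.inr ⟨h1', h2', ?_⟩)
      rw [hji]; omega


lemma Xv_lt_of_abs_lt (lam : Fin n → ℤ) {i j : Fin n} (h : |lam i| < |lam j|) :
    Xv lam i < Xv lam j := by
  have htbi := tb_lt lam i
  have htbj0 := tb_nonneg lam j
  have hkey : 2*(n:ℤ)*(|lam i| + 1) ≤ 2*(n:ℤ)*|lam j| := by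
    apply mul_le_mul_of_nonneg_left (by omega) (by positivity)
  unfold Xv
  nlinarith

lemma prec_iff_Xv (lam : Fin n → ℤ) (i j : Fin n) :
    Prec lam i j ↔ Xv lam j < Xv lam i := by
  have htbi0 := tb_nonneg lam i
  have htbj0 := tb_nonneg lam j
  have htbi := tb_lt lam i
  have htbj := tb_lt lam j
  rcases lt_trichotomy (|lam i|) (|lam j|) with h | h | h
  · have hXX := Xv_lt_of_abs_lt lam h
    constructor
    · rintro (hc | ⟨hc, _⟩)
      · omega
      · omega
    · intro hc; omega
  · have hkey : Xv lam i - Xv lam j = tb lam i - tb lam j := by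
      unfold Xv; rw [h]; ring
    constructor
    · rintro (hc | ⟨_, hc⟩)
      · omega
      · have := (tb_lt_iff lam i j).mp hc; omega
    · intro hc
      refine Or.inr ⟨h, (tb_lt_iff lam i j).mpr ?_⟩
      omega
  · have hXX := Xv_lt_of_abs_lt lam h
    constructor
    · rintro (hc | ⟨hc, _⟩)
      · exact hXX
      · omega
    · intro hc
      exact Or.inl h

lemma Xv_inj (lam : Fin n → ℤ) {i j : Fin n} (h : Xv lam i = Xv lam j) : i = j := by
  have htbi0 := tb_nonneg lam i
  have htbj0 := tb_nonneg lam j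
  have htbi := tb_lt lam i
  have htbj := tb_lt lam j
  have habs : |lam i| = |lam j| := by
    rcases lt_trichotomy (|lam i|) (|lam j|) with hc | hc | hc
    · have := Xv_lt_of_abs_lt lam hc; omega
    · exact hc
    · have := Xv_lt_of_abs_lt lam hc; omega
  have htb : tb lam i = tb lam j := by
    have hkey : Xv lam i - Xv lam j = tb lam i - tb lam j := by
      unfold Xv; rw [habs]; ring
    omega
  have hi : (i:ℤ) < (n:ℤ) := by exact_mod_cast i.isLt
  have hj : (j:ℤ) < (n:ℤ) := by exact_mod_cast j.isLt
  have hi0 : (0:ℤ) ≤ i := by exact_mod_cast Nat.zero_le i.val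
  have hj0 : (0:ℤ) ≤ j := by exact_mod_cast Nat.zero_le j.val
  have : (i:ℤ) = (j:ℤ) := by
    unfold tb at htb
    by_cases h1 : 0 ≤ lam i <;> by_cases h2 : 0 ≤ lam j <;>
      simp only [if_pos, if_neg, h1, h2, if_true, if_false] at htb <;> omega
  exact Fin.ext (by exact_mod_cast this)

lemma posOf_eq_card (lam : Fin n → ℤ) (i : Fin n) :
    posOf lam i = (Finset.univ.filter (fun j => Xv lam i < Xv lam j)).card := by
  unfold posOf
  congr 1
  ext j
  simp [prec_iff_Xv]

lemma posOf_strictMono (lam : Fin n → ℤ) {i j : Fin n} (h : Xv lam i < Xv lam j) :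
    posOf lam j < posOf lam i := by
  rw [posOf_eq_card, posOf_eq_card]
  apply Finset.card_lt_card
  constructor
  · intro k hk
    simp only [Finset.mem_filter, Finset.mem_univ, true_and] at hk ⊢
    omega
  · intro hsub
    have hj : j ∈ Finset.univ.filter (fun k => Xv lam i < Xv lam k) := by
      simp only [Finset.mem_filter, Finset.mem_univ, true_and]; exact h
    have := hsub hj
    simp only [Finset.mem_filter, Finset.mem_univ, true_and] at this
    omega

lemma posOf_inj (lam : Fin n → ℤ) {i j : Fin n} (h : posOf lam i = posOf lam j) : i = j := by
  rcases lt_trichotomy (Xv lam i) (Xv lam j) with hc | hc | hc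
  · have := posOf_strictMono lam hc; omega
  · exact Xv_inj lam hc
  · have := posOf_strictMono lam hc; omega

lemma posOf_lt_iff (lam : Fin n → ℤ) (i j : Fin n) :
    posOf lam i < posOf lam j ↔ Xv lam j < Xv lam i := by
  constructor
  · intro h
    rcases lt_trichotomy (Xv lam i) (Xv lam j) with hc | hc | hc
    · have := posOf_strictMono lam hc; omega
    · rw [Xv_inj lam hc] at h; omega
    · exact hc
  · exact posOf_strictMono lam

set_option maxHeartbeats 1000000 in
lemma core (n : ℕ) (A : ℕ) (hA : 2 ≤ A) (B : ℤ) (hB : 1 ≤ B)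
    (X Y c : Fin n → ℤ) (P Q : Fin n → ℕ)
    (hXinj : ∀ {i j : Fin n}, X i = X j → i = j)
    (hYinj : ∀ {i j : Fin n}, Y i = Y j → i = j)
    (hPlt : ∀ i, P i < n) (hQlt : ∀ i, Q i < n)
    (hPiff : ∀ i j, P i < P j ↔ X j < X i)
    (hQiff : ∀ i j, Q i < Q j ↔ Y j < Y i)
    (hXY : ∀ i, X i = Y i + B * c i)
    (hPQ : ∀ i, (Q i : ℤ) = (P i : ℤ) + (A : ℤ) * c i)
    (NB2 : ∀ u v u' v' : Fin n, (P v : ℤ) = (P u : ℤ) + ((A : ℤ) - 1) → X u - X v < B →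
      (P v' : ℤ) = (P u' : ℤ) + ((A : ℤ) - 1) → X u' - X v' < B → u = u') :
    ∀ i, c i = 0 := by
  rcases Nat.eq_zero_or_pos n with hn0 | hn0
  · intro i; exact absurd i.isLt (by omega)
  have hApos : (0:ℤ) < (A:ℤ) := by exact_mod_cast (by omega : 0 < A)
  -- injectivity of P and Q
  have hPinj : ∀ {i j : Fin n}, P i = P j → i = j := by
    intro i j h
    have h1 : ¬ X j < X i := by rw [← hPiff]; omega
    have h2 : ¬ X i < X j := by rw [← hPiff]; omega
    exact hXinj (by omega)
  have hQinj : ∀ {i j : Fin n}, Q i = Q j → i = j := by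
    intro i j h
    have h1 : ¬ Y j < Y i := by rw [← hQiff]; omega
    have h2 : ¬ Y i < Y j := by rw [← hQiff]; omega
    exact hYinj (by omega)
  -- inverse of P
  have hPsurj : ∀ t : Fin n, ∃ i, P i = (t : ℕ) := by
    have hbij : Function.Bijective (fun i => (⟨P i, hPlt i⟩ : Fin n)) := by
      rw [Fintype.bijective_iff_injective_and_card]
      exact ⟨fun i j h => hPinj (by simpa using congrArg Fin.val h), rfl⟩
    intro t
    obtain ⟨i, hi⟩ := hbij.surjective t
    exact ⟨i, by simpa using congrArg Fin.val hi⟩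
  have hQsurj : ∀ t : Fin n, ∃ i, Q i = (t : ℕ) := by
    have hbij : Function.Bijective (fun i => (⟨Q i, hQlt i⟩ : Fin n)) := by
      rw [Fintype.bijective_iff_injective_and_card]
      exact ⟨fun i j h => hQinj (by simpa using congrArg Fin.val h), rfl⟩
    intro t
    obtain ⟨i, hi⟩ := hbij.surjective t
    exact ⟨i, by simpa using congrArg Fin.val hi⟩
  set ψ : ℕ → Fin n := fun t => if h : t < n then Classical.choose (hPsurj ⟨t, h⟩) else ⟨0, hn0⟩
    with hψdef
  have hψ : ∀ t, t < n → P (ψ t) = t := by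
    intro t ht
    simp only [hψdef, dif_pos ht]
    exact Classical.choose_spec (hPsurj ⟨t, ht⟩)
  set φ : ℕ → Fin n := fun s => if h : s < n then Classical.choose (hQsurj ⟨s, h⟩) else ⟨0, hn0⟩
    with hφdef
  have hφ : ∀ s, s < n → Q (φ s) = s := by
    intro s hs
    simp only [hφdef, dif_pos hs]
    exact Classical.choose_spec (hQsurj ⟨s, hs⟩)
  -- monotonicity of X along positions
  have hψX : ∀ t t', t ≤ t' → t' < n → X (ψ t') ≤ X (ψ t) := by
    intro t t' htt ht'
    rcases Nat.eq_or_lt_of_le htt with h | h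
    · subst h; exact le_refl _
    · have : P (ψ t) < P (ψ t') := by rw [hψ t (by omega), hψ t' ht']; exact h
      exact le_of_lt ((hPiff _ _).mp this)
  -- Hit predicate
  set Hit : ℕ → Prop := fun t => X (ψ t) - X (ψ (t + (A-1))) < B with hHitdef
  -- at most one hit
  have NB2' : ∀ t1 t2, t1 + (A-1) < n → t2 + (A-1) < n → Hit t1 → Hit t2 → t1 = t2 := by
    intro t1 t2 h1 h2 hh1 hh2
    have hc : ((A:ℤ) - 1) = ((A - 1 : ℕ) : ℤ) := by
      have : 1 ≤ A := by omega
      push_cast [this]; ring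
    have e1 : (P (ψ (t1 + (A-1))) : ℤ) = (P (ψ t1) : ℤ) + ((A:ℤ) - 1) := by
      rw [hψ _ h1, hψ t1 (by omega), hc]; push_cast; ring
    have e2 : (P (ψ (t2 + (A-1))) : ℤ) = (P (ψ t2) : ℤ) + ((A:ℤ) - 1) := by
      rw [hψ _ h2, hψ t2 (by omega), hc]; push_cast; ring
    have := NB2 (ψ t1) (ψ (t1 + (A-1))) (ψ t2) (ψ (t2 + (A-1))) e1 hh1 e2 hh2
    have := congrArg P this
    rw [hψ t1 (by omega), hψ t2 (by omega)] at this
    exact this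
  -- telescoping sum bound
  have SUMB : ∀ (N e : ℕ), e + N*(A-1) < n → (∀ j, j < N → ¬ Hit (e + j*(A-1))) →
      B*(N:ℤ) ≤ X (ψ e) - X (ψ (e + N*(A-1))) := by
    intro N
    induction N with
    | zero => intro e he _; simp
    | succ N ih =>
      intro e he hnh
      have hstep : (N+1)*(A-1) = N*(A-1) + (A-1) := by ring
      have heN : e + N*(A-1) < n := by omega
      have h1 : B*(N:ℤ) ≤ X (ψ e) - X (ψ (e + N*(A-1))) :=
        ih e heN (fun j hj => hnh j (by omega))
      have h2 : ¬ Hit (e + N*(A-1)) := hnh N (by omega)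
      have h2' : B ≤ X (ψ (e + N*(A-1))) - X (ψ (e + N*(A-1) + (A-1))) := by
        simp only [hHitdef] at h2; omega
      have heq : e + N*(A-1) + (A-1) = e + (N+1)*(A-1) := by omega
      rw [heq] at h2'
      push_cast
      linarith
  -- slot displacement function
  set g : ℕ → ℤ := fun s => c (φ s) with hgdef
  have hstep : ∀ s, s + 1 < n →
      (A:ℤ) * (g (s+1) - g s) = 1 - ((P (φ (s+1)) : ℤ) - (P (φ s) : ℤ)) := by
    intro s hs
    have e1 := hPQ (φ (s+1))
    have e2 := hPQ (φ s)
    rw [hφ (s+1) hs] at e1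
    rw [hφ s (by omega)] at e2
    simp only [hgdef]
    push_cast at e1 e2 ⊢
    linarith
  have hφne : ∀ s, s + 1 < n → φ (s+1) ≠ φ s := by
    intro s hs h
    have := congrArg Q h
    rw [hφ (s+1) hs, hφ s (by omega)] at this
    omega
  -- descent bundle
  have hdesc_data : ∀ s, s + 1 < n → P (φ (s+1)) < P (φ s) →
      1 ≤ g (s+1) - g s ∧
      ((P (φ s) : ℤ) = (P (φ (s+1)) : ℤ) + (A:ℤ)*(g (s+1) - g s) - 1) ∧
      (X (φ (s+1)) - X (φ s) ≤ B * (g (s+1) - g s) - 1) := by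
    intro s hs hP
    have h1 := hstep s hs
    have hD1 : 1 ≤ g (s+1) - g s := by
      by_contra h
      push_neg at h
      have : g (s+1) - g s ≤ 0 := by omega
      have : (A:ℤ) * (g (s+1) - g s) ≤ 0 := mul_nonpos_of_nonneg_of_nonpos (le_of_lt hApos) this
      have hP' : (P (φ (s+1)) : ℤ) < (P (φ s) : ℤ) := by exact_mod_cast hP
      omega
    have hPvu : (P (φ s) : ℤ) = (P (φ (s+1)) : ℤ) + (A:ℤ)*(g (s+1) - g s) - 1 := by
      linarith [hstep s hs]
    have hYlt : Y (φ (s+1)) < Y (φ s) := by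
      have hq : Q (φ s) < Q (φ (s+1)) := by
        rw [hφ s (by omega), hφ (s+1) hs]; omega
      exact (hQiff _ _).mp hq
    have hdrop : X (φ (s+1)) - X (φ s) ≤ B * (g (s+1) - g s) - 1 := by
      have e1 := hXY (φ (s+1))
      have e2 := hXY (φ s)
      simp only [hgdef]
      linarith
    exact ⟨hD1, hPvu, hdrop⟩
  -- a descent with jump ≥ 2 is impossible
  have hdesc_false2 : ∀ s, s + 1 < n → P (φ (s+1)) < P (φ s) →
      2 ≤ g (s+1) - g s → False := by
    intro s hs hP hD2
    obtain ⟨hD1, hPvu, hdrop⟩ := hdesc_data s hs hP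
    set D : ℤ := g (s+1) - g s with hDdef
    set Dn : ℕ := D.toNat with hDndef
    have hDn : (Dn : ℤ) = D := Int.toNat_of_nonneg (by omega)
    have hDn2 : 2 ≤ Dn := by omega
    set u : Fin n := φ (s+1) with hudef
    set v : Fin n := φ s with hvdef
    set e : ℕ := P u with hedef
    set f : ℕ := P v with hfdef
    have hfn : f < n := hPlt v
    have hfe : (f:ℤ) = (e:ℤ) + (A:ℤ)*D - 1 := hPvu
    have hfeN : f + 1 = e + A*Dn := by
      have : ((f + 1 : ℕ) : ℤ) = ((e + A*Dn : ℕ) : ℤ) := by push_cast [hDn]; omega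
      exact_mod_cast this
    have hψe : ψ e = u := hPinj (by rw [hψ e (by omega)])
    have hψf : ψ f = v := hPinj (by rw [hψ f hfn])
    have hdropuf : X (ψ e) - X (ψ f) ≤ B*D - 1 := by rw [hψe, hψf]; exact hdrop
    rcases le_or_gt A Dn with hAD | hAD
    · -- big jump: one long family
      have hfit : e + (Dn+1)*(A-1) ≤ f := by
        have h1 : ((e + (Dn+1)*(A-1) : ℕ) : ℤ) ≤ (f : ℤ) := by
          have hc : ((A - 1 : ℕ) : ℤ) = (A:ℤ) - 1 := by push_cast [(by omega : 1 ≤ A)]; ring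
          have hADz : (A:ℤ) ≤ D := by rw [← hDn]; exact_mod_cast hAD
          have key : ((Dn:ℤ)+1)*((A:ℤ)-1) = (A:ℤ)*D + ((A:ℤ) - D - 1) := by
            rw [hDn]; ring
          push_cast [hc]
          linarith
        exact_mod_cast h1
      by_cases hex : ∃ j, j < Dn + 1 ∧ Hit (e + j*(A-1))
      · obtain ⟨j0, hj0N, hj0hit⟩ := hex
        by_cases hex2 : ∃ j, j < Dn + 1 ∧ j ≠ j0 ∧ Hit (e + j*(A-1))
        · obtain ⟨j1, hj1N, hj1ne, hj1hit⟩ := hex2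
          have hv0 : e + j0*(A-1) + (A-1) < n := by
            have h1 : (j0+1)*(A-1) ≤ (Dn+1)*(A-1) := Nat.mul_le_mul_right _ (by omega)
            have h2 : (j0+1)*(A-1) = j0*(A-1) + (A-1) := Nat.succ_mul _ _
            omega
          have hv1 : e + j1*(A-1) + (A-1) < n := by
            have h1 : (j1+1)*(A-1) ≤ (Dn+1)*(A-1) := Nat.mul_le_mul_right _ (by omega)
            have h2 : (j1+1)*(A-1) = j1*(A-1) + (A-1) := Nat.succ_mul _ _
            omega
          have := NB2' _ _ hv0 hv1 hj0hit hj1hit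
          have : j0 * (A-1) = j1 * (A-1) := by omega
          have := Nat.eq_of_mul_eq_mul_right (by omega : 0 < A - 1) this
          exact hj1ne this.symm
        · push_neg at hex2
          -- all windows except j0 are non-hits
          have hS1 : B*(j0:ℤ) ≤ X (ψ e) - X (ψ (e + j0*(A-1))) := by
            apply SUMB j0 e
            · have : j0*(A-1) ≤ (Dn+1)*(A-1) := Nat.mul_le_mul_right _ (by omega)
              omega
            · intro j hj
              exact hex2 j (by omega) (by omega)
          have hS2 : B*((Dn - j0 : ℕ):ℤ) ≤
              X (ψ (e + (j0+1)*(A-1))) - X (ψ (e + (j0+1)*(A-1) + (Dn - j0)*(A-1))) := by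
            apply SUMB (Dn - j0) (e + (j0+1)*(A-1))
            · have : (j0+1)*(A-1) + (Dn-j0)*(A-1) = (Dn+1)*(A-1) := by
                rw [← Nat.add_mul]
                congr 1
                omega
              omega
            · intro j hj
              have heq : e + (j0+1)*(A-1) + j*(A-1) = e + (j0+1+j)*(A-1) := by
                rw [Nat.add_mul (j0+1) j]
                ring
              rw [heq]
              exact hex2 (j0+1+j) (by omega) (by omega)
          have hmid : X (ψ (e + (j0+1)*(A-1))) ≤ X (ψ (e + j0*(A-1))) := by
            apply hψX
            · have : j0*(A-1) ≤ (j0+1)*(A-1) := Nat.mul_le_mul_right _ (by omega)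
              omega
            · have : (j0+1)*(A-1) ≤ (Dn+1)*(A-1) := Nat.mul_le_mul_right _ (by omega)
              omega
          have hend : X (ψ f) ≤ X (ψ (e + (j0+1)*(A-1) + (Dn - j0)*(A-1))) := by
            have heq : e + (j0+1)*(A-1) + (Dn-j0)*(A-1) = e + (Dn+1)*(A-1) := by
              have : (j0+1)*(A-1) + (Dn-j0)*(A-1) = (Dn+1)*(A-1) := by
                rw [← Nat.add_mul]; congr 1; omega
              omega
            rw [heq]
            exact hψX _ _ hfit hfn
          have hsum : B*(j0:ℤ) + B*((Dn - j0:ℕ):ℤ) ≤ X (ψ e) - X (ψ f) := by linarith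
          have hcast : ((Dn - j0 : ℕ):ℤ) = (Dn:ℤ) - (j0:ℤ) := by
            push_cast [(by omega : j0 ≤ Dn)]; ring
          rw [hcast] at hsum
          have : B * (Dn:ℤ) ≤ X (ψ e) - X (ψ f) := by linarith
          rw [hDn] at this
          linarith
      · push_neg at hex
        have hS : B*((Dn+1 : ℕ):ℤ) ≤ X (ψ e) - X (ψ (e + (Dn+1)*(A-1))) := by
          apply SUMB (Dn+1) e (by omega) (fun j hj => hex j hj)
        have hend : X (ψ f) ≤ X (ψ (e + (Dn+1)*(A-1))) := hψX _ _ hfit hfn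
        have : B*((Dn:ℤ)+1) ≤ X (ψ e) - X (ψ f) := by push_cast at hS ⊢; linarith
        rw [hDn] at this
        linarith
    · -- small jump 2 ≤ Dn < A : two shifted families
      have hA3 : 3 ≤ A := by omega
      have key : (Dn:ℤ)*((A:ℤ)-1) = (A:ℤ)*D - D := by rw [hDn]; ring
      have hfit1 : e + Dn*(A-1) ≤ f := by
        have h1 : ((e + Dn*(A-1) : ℕ) : ℤ) ≤ (f : ℤ) := by
          have hc : ((A - 1 : ℕ) : ℤ) = (A:ℤ) - 1 := by push_cast [(by omega : 1 ≤ A)]; ring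
          push_cast [hc]
          linarith
        exact_mod_cast h1
      have hfit2 : e + 1 + Dn*(A-1) ≤ f := by
        have h1 : ((e + 1 + Dn*(A-1) : ℕ) : ℤ) ≤ (f : ℤ) := by
          have hc : ((A - 1 : ℕ) : ℤ) = (A:ℤ) - 1 := by push_cast [(by omega : 1 ≤ A)]; ring
          push_cast [hc]
          linarith
        exact_mod_cast h1
      by_cases h1 : ∃ j, j < Dn ∧ Hit (e + j*(A-1))
      · by_cases h2 : ∃ j, j < Dn ∧ Hit (e + 1 + j*(A-1))
        · obtain ⟨j1, hj1N, hj1hit⟩ := h1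
          obtain ⟨j2, hj2N, hj2hit⟩ := h2
          have hv1 : e + j1*(A-1) + (A-1) < n := by
            have ha : (j1+1)*(A-1) ≤ Dn*(A-1) := Nat.mul_le_mul_right _ (by omega)
            have hb : (j1+1)*(A-1) = j1*(A-1) + (A-1) := Nat.succ_mul _ _
            omega
          have hv2 : e + 1 + j2*(A-1) + (A-1) < n := by
            have ha : (j2+1)*(A-1) ≤ Dn*(A-1) := Nat.mul_le_mul_right _ (by omega)
            have hb : (j2+1)*(A-1) = j2*(A-1) + (A-1) := Nat.succ_mul _ _
            omega
          have heq := NB2' _ _ hv1 hv2 hj1hit hj2hit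
          -- e + j1*(A-1) = e + 1 + j2*(A-1) is impossible since A-1 ≥ 2
          rcases le_or_gt j1 j2 with hj | hj
          · have ha : j1*(A-1) ≤ j2*(A-1) := Nat.mul_le_mul_right _ hj
            omega
          · have ha : (j2+1)*(A-1) ≤ j1*(A-1) := Nat.mul_le_mul_right _ (by omega)
            have hb : (j2+1)*(A-1) = j2*(A-1) + (A-1) := Nat.succ_mul _ _
            omega
        · push_neg at h2
          have hS : B*((Dn:ℕ):ℤ) ≤ X (ψ (e+1)) - X (ψ (e + 1 + Dn*(A-1))) := by
            apply SUMB Dn (e+1) (by omega) (fun j hj => h2 j hj)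
          have ha : X (ψ (e+1)) ≤ X (ψ e) := hψX e (e+1) (by omega) (by omega)
          have hb : X (ψ f) ≤ X (ψ (e + 1 + Dn*(A-1))) := hψX _ _ hfit2 hfn
          have : B*(Dn:ℤ) ≤ X (ψ e) - X (ψ f) := by linarith
          rw [hDn] at this
          linarith
      · push_neg at h1
        have hS : B*((Dn:ℕ):ℤ) ≤ X (ψ e) - X (ψ (e + Dn*(A-1))) := by
          apply SUMB Dn e (by omega) (fun j hj => h1 j hj)
        have hb : X (ψ f) ≤ X (ψ (e + Dn*(A-1))) := hψX _ _ hfit1 hfn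
        have : B*(Dn:ℤ) ≤ X (ψ e) - X (ψ f) := by linarith
        rw [hDn] at this
        linarith
  -- a descent with jump 1 gives a hit at P (φ (s+1))
  have hdesc_hit : ∀ s, s + 1 < n → P (φ (s+1)) < P (φ s) →
      g (s+1) - g s = 1 →
      Hit (P (φ (s+1))) ∧ P (φ (s+1)) + (A-1) < n := by
    intro s hs hP hD1
    obtain ⟨_, hPvu, hdrop⟩ := hdesc_data s hs hP
    rw [hD1] at hPvu hdrop
    have hfn : P (φ s) < n := hPlt (φ s)
    have hfeN : P (φ s) = P (φ (s+1)) + (A-1) := by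
      have h1 : ((P (φ s) : ℕ) : ℤ) = ((P (φ (s+1)) + (A-1) : ℕ) : ℤ) := by
        have hc : ((A - 1 : ℕ) : ℤ) = (A:ℤ) - 1 := by push_cast [(by omega : 1 ≤ A)]; ring
        push_cast [hc]
        linarith
      exact_mod_cast h1
    have hψe : ψ (P (φ (s+1))) = φ (s+1) := hPinj (by rw [hψ _ (by omega)])
    have hψf : ψ (P (φ (s+1)) + (A-1)) = φ s := by
      apply hPinj
      rw [hψ _ (by omega), hfeN]
    constructor
    · simp only [hHitdef]
      rw [hψe, hψf]
      linarith
    · omega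
  -- sum of all c's is zero
  have hsumPQ : ∑ i : Fin n, ((P i : ℤ)) = ∑ i : Fin n, ((Q i : ℤ)) := by
    have h1 : ∑ i : Fin n, ((P i : ℤ)) = ∑ t : Fin n, ((t : ℕ) : ℤ) := by
      apply Fintype.sum_bijective (fun i => (⟨P i, hPlt i⟩ : Fin n))
      · rw [Fintype.bijective_iff_injective_and_card]
        exact ⟨fun i j h => hPinj (by simpa using congrArg Fin.val h), rfl⟩
      · intro i; rfl
    have h2 : ∑ i : Fin n, ((Q i : ℤ)) = ∑ t : Fin n, ((t : ℕ) : ℤ) := by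
      apply Fintype.sum_bijective (fun i => (⟨Q i, hQlt i⟩ : Fin n))
      · rw [Fintype.bijective_iff_injective_and_card]
        exact ⟨fun i j h => hQinj (by simpa using congrArg Fin.val h), rfl⟩
      · intro i; rfl
    rw [h1, h2]
  have hsumc : ∑ i : Fin n, c i = 0 := by
    have h1 : ∑ i : Fin n, ((A:ℤ) * c i) = 0 := by
      have : ∀ i : Fin n, (A:ℤ) * c i = (Q i : ℤ) - (P i : ℤ) := by
        intro i; have := hPQ i; linarith
      rw [Finset.sum_congr rfl (fun i _ => this i), Finset.sum_sub_distrib, hsumPQ]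
      ring
    rw [← Finset.mul_sum] at h1
    have := mul_eq_zero.mp h1
    rcases this with h | h
    · omega
    · exact h
  have hsumg : ∑ s ∈ Finset.range n, g s = 0 := by
    have h1 : ∑ s ∈ Finset.range n, g s = ∑ t : Fin n, g (t : ℕ) :=
      (Fin.sum_univ_eq_sum_range g n).symm
    have h2 : ∑ t : Fin n, g (t : ℕ) = ∑ i : Fin n, c i := by
      apply Fintype.sum_bijective (fun t : Fin n => φ (t : ℕ))
      · rw [Fintype.bijective_iff_injective_and_card]
        constructor
        · intro t t' h
          have := congrArg Q h
          rw [hφ _ t.isLt, hφ _ t'.isLt] at this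
          exact Fin.ext this
        · rfl
      · intro t; rfl
    rw [h1, h2, hsumc]
  -- monotone segments
  have MONOSEG : ∀ s t, s ≤ t → t < n →
      (∀ s', s ≤ s' → s' + 1 ≤ t → ¬ (P (φ (s'+1)) < P (φ s'))) → g t ≤ g s := by
    intro s t hst
    induction t, hst using Nat.le_induction with
    | base => intro _ _; exact le_refl _
    | succ t ht ih =>
      intro htn hfree
      have h1 : g t ≤ g s := ih (by omega) (fun s' h1 h2 => hfree s' h1 (by omega))
      have hnd : ¬ (P (φ (t+1)) < P (φ t)) := hfree t ht (le_refl _)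
      have hne : P (φ (t+1)) ≠ P (φ t) := by
        intro h
        exact hφne t htn (hPinj h)
      have hgt : P (φ t) < P (φ (t+1)) := by omega
      have h2 : g (t+1) ≤ g t := by
        have hs := hstep t htn
        have : (1:ℤ) - ((P (φ (t+1)) : ℤ) - (P (φ t) : ℤ)) ≤ 0 := by
          have : (P (φ t) : ℤ) < (P (φ (t+1)) : ℤ) := by exact_mod_cast hgt
          omega
        nlinarith
      linarith
  -- boundary values
  have hg0 : g 0 ≤ 0 := by
    have := hPQ (φ 0)
    rw [hφ 0 hn0] at this
    simp only [Nat.cast_zero] at this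
    nlinarith [Nat.cast_nonneg (α := ℤ) (P (φ 0))]
  have hgn : 0 ≤ g (n-1) := by
    have := hPQ (φ (n-1))
    rw [hφ (n-1) (by omega)] at this
    have hPle : (P (φ (n-1)) : ℤ) ≤ ((n-1 : ℕ) : ℤ) := by
      have := hPlt (φ (n-1))
      have : P (φ (n-1)) ≤ n - 1 := by omega
      exact_mod_cast this
    nlinarith
  -- no descent at all
  have hnodesc : ∀ s, s + 1 < n → ¬ (P (φ (s+1)) < P (φ s)) := by
    by_contra hcon
    push_neg at hcon
    obtain ⟨s0, hs0n, hs0d⟩ := hcon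
    obtain ⟨hD1, _, _⟩ := hdesc_data s0 hs0n hs0d
    rcases (by omega : 2 ≤ g (s0+1) - g s0 ∨ g (s0+1) - g s0 = 1) with h2 | h1
    · exact hdesc_false2 s0 hs0n hs0d h2
    obtain ⟨hhit0, hval0⟩ := hdesc_hit s0 hs0n hs0d h1
    by_cases hex : ∃ s1, s1 ≠ s0 ∧ s1 + 1 < n ∧ P (φ (s1+1)) < P (φ s1)
    · obtain ⟨s1, hs1ne, hs1n, hs1d⟩ := hex
      obtain ⟨hD1', _, _⟩ := hdesc_data s1 hs1n hs1d
      rcases (by omega : 2 ≤ g (s1+1) - g s1 ∨ g (s1+1) - g s1 = 1) with h2' | h1'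
      · exact hdesc_false2 s1 hs1n hs1d h2'
      obtain ⟨hhit1, hval1⟩ := hdesc_hit s1 hs1n hs1d h1'
      have heq := NB2' _ _ hval0 hval1 hhit0 hhit1
      have : φ (s0+1) = φ (s1+1) := hPinj heq
      have := congrArg Q this
      rw [hφ (s0+1) hs0n, hφ (s1+1) hs1n] at this
      omega
    · -- exactly one descent : sum contradiction
      push_neg at hex
      have hterm1 : ∀ s, s ≤ s0 → g s ≤ 0 := by
        intro s hs
        have hms : g s ≤ g 0 := by
          apply MONOSEG 0 s (by omega) (by omega)
          intro s' _ h2 hd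
          have hs'n : s' + 1 < n := by omega
          have hle := hex s' (by omega) hs'n
          omega
        linarith
      have hterm2 : ∀ s, s0 + 1 ≤ s → s < n → 0 ≤ g s := by
        intro s hs hsn
        have hms : g (n-1) ≤ g s := by
          apply MONOSEG s (n-1) (by omega) (by omega)
          intro s' h1 h2 hd
          have hs'n : s' + 1 < n := by omega
          have hle := hex s' (by omega) hs'n
          omega
        linarith
      have hsplit : ∑ s ∈ Finset.range n, g s =
          ∑ s ∈ Finset.Ico 0 (s0+1), g s + ∑ s ∈ Finset.Ico (s0+1) n, g s := by
        rw [Finset.range_eq_Ico]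
        exact (Finset.sum_Ico_consecutive _ (by omega) (by omega)).symm
      have hS1 : ∑ s ∈ Finset.Ico 0 (s0+1), g s ≤ 0 :=
        Finset.sum_nonpos (fun s hs => hterm1 s (by simp at hs; omega))
      have hS2 : 0 ≤ ∑ s ∈ Finset.Ico (s0+1) n, g s :=
        Finset.sum_nonneg (fun s hs => hterm2 s (by simp at hs; omega) (by simp at hs; omega))
      have hz : ∑ s ∈ Finset.Ico 0 (s0+1), g s + ∑ s ∈ Finset.Ico (s0+1) n, g s = 0 := by
        rw [← hsplit]; exact hsumg
      have hterm1b : ∀ s, s ≤ s0 → g s0 ≤ g s := by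
        intro s hs
        apply MONOSEG s s0 hs (by omega)
        intro s' h1 h2 hd
        have hs'n : s' + 1 < n := by omega
        have hle := hex s' (by omega) hs'n
        omega
      have hterm2b : ∀ s, s0 + 1 ≤ s → s < n → g s ≤ g (s0+1) := by
        intro s hs hsn
        apply MONOSEG (s0+1) s hs hsn
        intro s' h1 h2 hd
        have hs'n : s' + 1 < n := by omega
        have hle := hex s' (by omega) hs'n
        omega
      have hgs0 : g s0 ≤ 0 := hterm1 s0 (le_refl _)
      have hgs01 : 0 ≤ g (s0+1) := hterm2 (s0+1) (le_refl _) hs0n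
      rcases (by omega : g s0 = 0 ∨ g s0 = -1) with hc | hc
      · -- all of the first part is 0, so the second part sums to 0, forcing g (s0+1) = 0
        have hS1z : ∑ s ∈ Finset.Ico 0 (s0+1), g s = 0 := by
          apply Finset.sum_eq_zero
          intro s hs
          simp only [Finset.mem_Ico] at hs
          have h1 := hterm1 s (by omega)
          have h2 := hterm1b s (by omega)
          omega
        have hS2z : ∑ s ∈ Finset.Ico (s0+1) n, g s = 0 := by linarith
        have := (Finset.sum_eq_zero_iff_of_nonneg
          (fun s hs => hterm2 s (by simp at hs; omega) (by simp at hs; omega))).mp hS2z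
          (s0+1) (Finset.mem_Ico.mpr ⟨le_refl _, hs0n⟩)
        omega
      · -- g (s0+1) = 0, all of the second part is 0, so the first sums to 0, forcing g s0 = 0
        have hgs01' : g (s0+1) = 0 := by omega
        have hS2z : ∑ s ∈ Finset.Ico (s0+1) n, g s = 0 := by
          apply Finset.sum_eq_zero
          intro s hs
          simp only [Finset.mem_Ico] at hs
          have h1 := hterm2 s (by omega) (by omega)
          have h2 := hterm2b s (by omega) (by omega)
          omega
        have hS1z : ∑ s ∈ Finset.Ico 0 (s0+1), g s = 0 := by linarith
        have := (Finset.sum_eq_zero_iff_of_nonpos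
          (fun s hs => hterm1 s (by simp at hs; omega))).mp hS1z s0
          (Finset.mem_Ico.mpr ⟨by omega, by omega⟩)
        omega
  -- hence g is constant 0 and c ≡ 0
  have hgz : ∀ s, s < n → g s = 0 := by
    intro s hs
    have h1 : g s ≤ g 0 := MONOSEG 0 s (by omega) hs (fun s' _ h2 => hnodesc s' (by omega))
    have h2 : g (n-1) ≤ g s := MONOSEG s (n-1) (by omega) (by omega)
      (fun s' _ h2 => hnodesc s' (by omega))
    omega
  intro i
  have hφQ : φ (Q i) = i := by
    apply hQinj
    rw [hφ (Q i) (hQlt i)]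
  have := hgz (Q i) (hQlt i)
  simp only [hgdef] at this
  rw [hφQ] at this
  exact this

lemma abs_rho (lam : Fin n → ℤ) (i : Fin n) : |rho lam i| = (n:ℤ) - 1 - (posOf lam i : ℤ) := by
  have h1 : posOf lam i < n := posOf_lt lam i
  have h2 : (posOf lam i : ℤ) ≤ (n:ℤ) - 1 := by
    have : ((posOf lam i : ℕ) : ℤ) < (n : ℤ) := by exact_mod_cast h1
    omega
  unfold rho sgn
  split
  · rw [one_mul, abs_of_nonneg (by omega)]
  · rw [neg_one_mul, abs_neg, abs_of_nonneg (by omega)]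

lemma isNbhd_of_window (k r : ℤ) (hr : 1 ≤ r - 1) (lam : Fin n → ℤ) (u v : Fin n)
    (hpos : (posOf lam v : ℤ) = (posOf lam u : ℤ) + k)
    (hX : Xv lam u - Xv lam v < 2*(n:ℤ)*(r-1)) :
    IsNbhd (k+1) (r-1) lam u v := by
  have hnu : 0 < n := u.pos
  have hn1 : (1:ℤ) ≤ (n:ℤ) := by exact_mod_cast hnu
  have htbu0 := tb_nonneg lam u
  have htbv0 := tb_nonneg lam v
  have htbu := tb_lt lam u
  have htbv := tb_lt lam v
  have hXexp : Xv lam u - Xv lam v =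
      2*(n:ℤ)*(|lam u| - |lam v|) + (tb lam u - tb lam v) := by
    unfold Xv; ring
  refine ⟨?_, ?_, ?_⟩
  · rw [abs_rho lam u, abs_rho lam v]
    omega
  · by_contra hcon
    push_neg at hcon
    have hge : r ≤ |lam u| - |lam v| := by omega
    have hmul : 2*(n:ℤ)*r ≤ 2*(n:ℤ)*(|lam u| - |lam v|) :=
      mul_le_mul_of_nonneg_left hge (by positivity)
    nlinarith
  · intro habs
    have htb : tb lam u < tb lam v := by
      rw [habs] at hXexp
      omega
    have := (tb_lt_iff lam v u).mpr htb
    tauto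


set_option maxHeartbeats 1000000

/-- an element λ with at most one (k+1,r−1)-neighborhood has non-degenerate
eigenvalue under t^{k+1}q^{r−1} = 1: if σ(λ) = σ(μ) and λ − μ = (r−1)m, ρ(λ) − ρ(μ) = (k+1)m
componentwise for an integer vector m, then λ = μ. -/
theorem stmt3 (n : ℕ) (hn : 2 ≤ n) (k r : ℤ)
    (hk2 : 2 ≤ k + 1) (hkn : k + 1 ≤ (n : ℤ)) (hr : 1 ≤ r - 1)
    (lam mu : Fin n → ℤ)
    (hcount : nbhdCount (k + 1) (r - 1) lam ≤ 1)
    (hsg : ∀ i, sgn lam i = sgn mu i)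
    (m : Fin n → ℤ)
    (heq : ∀ i, lam i = mu i + (r - 1) * m i)
    (hrho : ∀ i, rho lam i = rho mu i + (k + 1) * m i) :
    lam = mu := by
  set A : ℕ := (k+1).toNat with hAdef
  have hAz : ((A:ℕ):ℤ) = k + 1 := Int.toNat_of_nonneg (by omega)
  have hA : 2 ≤ A := by omega
  set B : ℤ := 2*(n:ℤ)*(r-1) with hBdef
  have hn2 : (2:ℤ) ≤ (n:ℤ) := by exact_mod_cast hn
  have hB : 1 ≤ B := by nlinarith
  set c : Fin n → ℤ := fun i => sgn lam i * m i with hcdef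
  -- sign agreement
  have hsg' : ∀ i, (0 ≤ lam i ↔ 0 ≤ mu i) := by
    intro i
    have := hsg i
    unfold sgn at this
    by_cases h1 : 0 ≤ lam i <;> by_cases h2 : 0 ≤ mu i <;>
      simp only [h1, h2, if_pos, if_neg, if_true, if_false] at this ⊢ <;> omega
  -- X relation
  have hXY : ∀ i, Xv lam i = Xv mu i + B * c i := by
    intro i
    have htb : tb lam i = tb mu i := by
      unfold tb
      by_cases h1 : 0 ≤ lam i
      · rw [if_pos h1, if_pos ((hsg' i).mp h1)]
      · rw [if_neg h1, if_neg (fun h => h1 ((hsg' i).mpr h))]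
    have habs : |lam i| = |mu i| + (r-1) * c i := by
      simp only [hcdef]
      unfold sgn
      by_cases h1 : 0 ≤ lam i
      · have h2 : 0 ≤ mu i := (hsg' i).mp h1
        rw [if_pos h1, abs_of_nonneg h1, abs_of_nonneg h2, heq i]
        ring
      · have h2 : ¬ 0 ≤ mu i := fun h => h1 ((hsg' i).mpr h)
        rw [if_neg h1, abs_of_neg (by omega), abs_of_neg (by omega), heq i]
        ring
    unfold Xv
    rw [htb, habs, hBdef]
    ring
  -- position relation
  have hPQ : ∀ i, (posOf mu i : ℤ) = (posOf lam i : ℤ) + ((A:ℕ):ℤ) * c i := by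
    intro i
    have h := hrho i
    unfold rho at h
    rw [← hsg i] at h
    have habsl := abs_rho lam i
    have habsm := abs_rho mu i
    simp only [hcdef]
    rw [hAz]
    unfold sgn at h ⊢
    by_cases h1 : 0 ≤ lam i
    · rw [if_pos h1] at h ⊢
      have : (n:ℤ) - 1 - (posOf lam i : ℤ) = ((n:ℤ) - 1 - (posOf mu i : ℤ)) + (k+1)*(m i) := by
        linarith [h]
      nlinarith [this]
    · rw [if_neg h1] at h ⊢
      have : -((n:ℤ) - 1 - (posOf lam i : ℤ)) = -((n:ℤ) - 1 - (posOf mu i : ℤ)) + (k+1)*(m i) := by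
        linarith [h]
      nlinarith [this]
  -- at most one window pair
  have NB2 : ∀ u v u' v' : Fin n,
      (posOf lam v : ℤ) = (posOf lam u : ℤ) + (((A:ℕ):ℤ) - 1) → Xv lam u - Xv lam v < B →
      (posOf lam v' : ℤ) = (posOf lam u' : ℤ) + (((A:ℕ):ℤ) - 1) → Xv lam u' - Xv lam v' < B →
      u = u' := by
    intro u v u' v' h1 h2 h3 h4
    rw [hAz] at h1 h3
    have hn1 : IsNbhd (k+1) (r-1) lam u v :=
      isNbhd_of_window k r hr lam u v (by omega) h2
    have hn2 : IsNbhd (k+1) (r-1) lam u' v' :=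
      isNbhd_of_window k r hr lam u' v' (by omega) h4
    by_contra hne
    have hmem1 : ((u,v) : Fin n × Fin n) ∈
        (Finset.univ : Finset (Fin n × Fin n)).filter
          (fun p => IsNbhd (k+1) (r-1) lam p.1 p.2) := by
      simp only [Finset.mem_filter, Finset.mem_univ, true_and]
      exact hn1
    have hmem2 : ((u',v') : Fin n × Fin n) ∈
        (Finset.univ : Finset (Fin n × Fin n)).filter
          (fun p => IsNbhd (k+1) (r-1) lam p.1 p.2) := by
      simp only [Finset.mem_filter, Finset.mem_univ, true_and]
      exact hn2
    have hlt : 1 < ((Finset.univ : Finset (Fin n × Fin n)).filter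
        (fun p => IsNbhd (k+1) (r-1) lam p.1 p.2)).card := by
      apply Finset.one_lt_card.mpr
      exact ⟨(u,v), hmem1, (u',v'), hmem2, by simp [Prod.ext_iff]; intro h; exact absurd h hne⟩
    unfold nbhdCount at hcount
    omega
  -- apply the core lemma
  have hzero : ∀ i, c i = 0 := by
    apply core n A hA B hB (Xv lam) (Xv mu) c (posOf lam) (posOf mu)
    · intro i j h; exact Xv_inj lam h
    · intro i j h; exact Xv_inj mu h
    · exact posOf_lt lam
    · exact posOf_lt mu
    · exact posOf_lt_iff lam
    · exact posOf_lt_iff mu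
    · exact hXY
    · exact hPQ
    · exact NB2
  -- conclude
  funext i
  have hm : m i = 0 := by
    have := hzero i
    simp only [hcdef] at this
    unfold sgn at this
    by_cases h1 : 0 ≤ lam i
    · rw [if_pos h1] at this; omega
    · rw [if_neg h1] at this
      have : -(m i) = 0 := by linarith
      omega
  rw [heq i, hm]
  ring


end CCnDAHA
end

section
/- Let k ≥ 1 and m ≥ 1 be integers, n = k·m, and let K be a field with q, t ∈ K^× satisfying t^{k+1}·q = 1. Then the Laurent polynomial ∏_{ℓ=1}^{k} ∏_{m(ℓ−1) < i < j ≤ mℓ} (x_i − t^{−1}x_j)(1 − t^{ℓ}·q·x_i^{−1}x_j^{−1}) in K[x_1^{±1},…,x_n^{±1}] satisfies the 1-wheel condition of type (k+1, 1). -/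
open scoped Classical

namespace CCnDAHA

variable {n : ℕ}




noncomputable def chiz {K : Type*} [Field K] (z : Fin n → Kˣ) :
    Multiplicative (Fin n →₀ ℤ) →* K where
  toFun v := ∏ i, (z i : K) ^ ((Multiplicative.toAdd v) i)
  map_one' := by simp
  map_mul' a b := by
    show (∏ i, (z i : K) ^ ((Multiplicative.toAdd (a*b)) i)) = _
    rw [← Finset.prod_mul_distrib]
    refine Finset.prod_congr rfl fun i _ => ?_
    have : (Multiplicative.toAdd (a * b)) i = Multiplicative.toAdd a i + Multiplicative.toAdd b i := rfl
    rw [this, zpow_add₀ (Units.ne_zero (z i))]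

noncomputable def Ehom {K : Type*} [Field K] (z : Fin n → Kˣ) :
    LaurentMv K n →ₐ[K] K := AddMonoidAlgebra.lift K K (Fin n →₀ ℤ) (chiz z)

theorem evalAt_eq {K : Type*} [Field K] (z : Fin n → Kˣ) (f : LaurentMv K n) :
    evalAt (fun i => (z i : K)) f = Ehom z f := by
  rw [Ehom, AddMonoidAlgebra.lift_apply, evalAt]
  refine Finsupp.sum_congr fun v _ => ?_
  rw [smul_eq_mul]; rfl

theorem chiz_single {K : Type*} [Field K] (z : Fin n → Kˣ) (a : Fin n) (e : ℤ) :
    chiz z (Multiplicative.ofAdd (Finsupp.single a e)) = (z a : K) ^ e := by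
  show ∏ i, (z i : K) ^ ((Finsupp.single a e) i) = (z a : K) ^ e
  rw [Finset.prod_eq_single a]
  · rw [Finsupp.single_eq_same]
  · intro b _ hb; rw [Finsupp.single_eq_of_ne' (Ne.symm hb), zpow_zero]
  · intro h; exact absurd (Finset.mem_univ a) h

theorem Ehom_single {K : Type*} [Field K] (z : Fin n → Kˣ) (v : Fin n →₀ ℤ) (c : K) :
    Ehom z (AddMonoidAlgebra.single v c) = c * chiz z (Multiplicative.ofAdd v) := by
  rw [Ehom, AddMonoidAlgebra.lift_single, smul_eq_mul]

/-- evaluation of the standard factor -/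
theorem Ehom_factor {K : Type*} [Field K] (z : Fin n → Kˣ) (i j : Fin n) (c1 c2 : K) :
    Ehom z ((AddMonoidAlgebra.single (Finsupp.single i 1) (1 : K)
              - AddMonoidAlgebra.single (Finsupp.single j 1) c1)
            * (AddMonoidAlgebra.single 0 1
              - AddMonoidAlgebra.single
                  (Finsupp.single i (-1) + Finsupp.single j (-1)) c2))
    = ((z i : K) - c1 * (z j : K)) * (1 - c2 * ((z i : K))⁻¹ * ((z j : K))⁻¹) := by
  rw [map_mul, map_sub, map_sub, Ehom_single, Ehom_single, Ehom_single, Ehom_single]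
  have h0 : chiz z (Multiplicative.ofAdd (0 : Fin n →₀ ℤ)) = 1 := map_one (chiz z)
  have hadd : chiz z (Multiplicative.ofAdd (Finsupp.single i (-1) + Finsupp.single j (-1)))
      = ((z i : K))⁻¹ * ((z j : K))⁻¹ := by
    rw [ofAdd_add, map_mul, chiz_single, chiz_single, zpow_neg_one, zpow_neg_one]
  rw [h0, hadd, chiz_single, chiz_single, zpow_one, zpow_one]
  ring
/-- chained strict increase -/
lemma strict_chain {f : ℕ → ℕ} {hi : ℕ} (h : ∀ j, j + 1 ≤ hi → f j < f (j+1)) :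
    ∀ a b, a < b → b ≤ hi → f a < f b := by
  intro a b hab hb
  induction b with
  | zero => omega
  | succ b ih =>
    rcases Nat.lt_or_ge a b with h' | h'
    · exact lt_trans (ih h' (by omega)) (h b hb)
    · have : a = b := by omega
      subst this; exact h a hb

lemma strict_chain' {f : ℕ → ℕ} {lo hi : ℕ} (h : ∀ j, lo ≤ j → j + 1 ≤ hi → f (j+1) < f j) :
    ∀ a b, lo ≤ a → a < b → b ≤ hi → f b < f a := by
  intro a b ha hab hb
  induction b with
  | zero => omega
  | succ b ih =>
    rcases Nat.lt_or_ge a b with h' | h'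
    · exact lt_trans (h b (by omega) hb) (ih h' (by omega))
    · have : a = b := by omega
      subst this; exact h a ha hb

/-- counting below in increasing run -/
lemma count_lt_inc {f : ℕ → ℕ} {s a : ℕ} (ha : a < s)
    (hmono : ∀ x y, x < y → y < s → f x < f y) :
    (Finset.range s).filter (fun j => f j < f a) = Finset.range a := by
  ext j
  simp only [Finset.mem_filter, Finset.mem_range]
  constructor
  · rintro ⟨hj, hfj⟩
    by_contra h
    push_neg at h
    rcases Nat.eq_or_lt_of_le h with h' | h'
    · subst h'; omega
    · exact absurd (hmono a j h' hj) (by omega)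
  · intro hj
    exact ⟨lt_trans hj ha, hmono j a hj ha⟩

/-- counting below in decreasing run on Ico s (k+1) -/
lemma count_lt_dec {f : ℕ → ℕ} {s k b : ℕ} (hb1 : s ≤ b) (hb2 : b < k + 1)
    (hanti : ∀ x y, s ≤ x → x < y → y < k + 1 → f y < f x) :
    (Finset.Ico s (k+1)).filter (fun j => f j < f b) = Finset.Ico (b+1) (k+1) := by
  ext j
  simp only [Finset.mem_filter, Finset.mem_Ico]
  constructor
  · rintro ⟨⟨hj1, hj2⟩, hfj⟩
    refine ⟨?_, hj2⟩
    by_contra h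
    push_neg at h
    rcases Nat.eq_or_lt_of_le (Nat.lt_succ_iff.mp h) with h' | h'
    · subst h'; omega
    · exact absurd (hanti j b hj1 h' hb2) (by omega)
  · rintro ⟨hj1, hj2⟩
    exact ⟨⟨le_trans hb1 (by omega), hj2⟩, hanti b j hb1 (by omega) hj2⟩

/-- at most one j in increasing run with f j = ℓ -/
lemma card_eq_le_one_inc {f : ℕ → ℕ} {s ℓ : ℕ}
    (hmono : ∀ x y, x < y → y < s → f x < f y) :
    ((Finset.range s).filter (fun j => f j = ℓ)).card ≤ 1 := by
  refine Finset.card_le_one.mpr fun a ha b hb => ?_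
  simp only [Finset.mem_filter, Finset.mem_range] at ha hb
  rcases lt_trichotomy a b with h | h | h
  · exact absurd (hmono a b h hb.1) (by omega)
  · exact h
  · exact absurd (hmono b a h ha.1) (by omega)

lemma card_eq_le_one_dec {f : ℕ → ℕ} {s k ℓ : ℕ}
    (hanti : ∀ x y, s ≤ x → x < y → y < k + 1 → f y < f x) :
    ((Finset.Ico s (k+1)).filter (fun j => f j = ℓ)).card ≤ 1 := by
  refine Finset.card_le_one.mpr fun a ha b hb => ?_
  simp only [Finset.mem_filter, Finset.mem_Ico] at ha hb
  rcases lt_trichotomy a b with h | h | h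
  · exact absurd (hanti a b ha.1.1 h hb.1.2) (by omega)
  · exact h
  · exact absurd (hanti b a hb.1.1 h ha.1.2) (by omega)

/-- exactly one p is 1, rest 0, from sum = 1 -/
lemma sum_eq_one_nat {k1 : ℕ} (p : Fin k1 → ℕ) (h : ∑ m, p m = 1) :
    ∃ m0, p m0 = 1 ∧ ∀ m, m ≠ m0 → p m = 0 := by
  have hex : ∃ m0, p m0 ≠ 0 := by
    by_contra hc
    push_neg at hc
    rw [Finset.sum_congr rfl (fun x _ => hc x)] at h
    simp at h
  obtain ⟨m0, hm0⟩ := hex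
  have h1 : p m0 ≤ 1 := h ▸ Finset.single_le_sum (f := p) (fun i _ => Nat.zero_le _) (Finset.mem_univ m0)
  refine ⟨m0, by omega, fun m hm => ?_⟩
  have h2 : p m0 + p m ≤ 1 := by
    rw [← h]
    have : ({m0, m} : Finset (Fin k1)) ⊆ Finset.univ := Finset.subset_univ _
    calc p m0 + p m = ∑ i ∈ ({m0, m} : Finset (Fin k1)), p i := by
          rw [Finset.sum_pair (Ne.symm hm)]
      _ ≤ ∑ i, p i := Finset.sum_le_sum_of_subset this
  omega

/-- existence of crossing level -/
lemma crossing {N : ℕ → ℕ} {k : ℕ} (h0 : N 1 = 0) (hk : N (k+1) = k + 1) (hk1 : 1 ≤ k) :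
    ∃ ℓ, 1 ≤ ℓ ∧ ℓ ≤ k ∧ N ℓ ≤ ℓ - 1 ∧ ℓ + 1 ≤ N (ℓ+1) := by
  have hex : ∃ d, d + 1 ≤ N (d+1) := ⟨k, le_of_eq hk.symm⟩
  classical
  let d0 := Nat.find hex
  have hspec : d0 + 1 ≤ N (d0 + 1) := Nat.find_spec hex
  have hd0k : d0 ≤ k := Nat.find_le (le_of_eq hk.symm)
  have hd0pos : 1 ≤ d0 := by
    by_contra h
    push_neg at h
    have hz : d0 = 0 := by omega
    rw [hz] at hspec
    rw [zero_add, h0] at hspec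
    omega
  have hprev : ¬ (d0 - 1 + 1 ≤ N (d0 - 1 + 1)) := Nat.find_min hex (by omega)
  refine ⟨d0, hd0pos, hd0k, ?_, hspec⟩
  have : d0 - 1 + 1 = d0 := by omega
  rw [this] at hprev
  omega


/-- if one factor vanishes, the whole product evaluates to zero -/
theorem key_vanish {K : Type*} [Field K] {k m : ℕ} (hm : 1 ≤ m)
    (t q : K) (z : Fin (k * m) → Kˣ)
    (ℓ : ℕ) (hl1 : 1 ≤ ℓ) (hl2 : ℓ ≤ k)
    (i j : Fin (k * m)) (hij : i < j)
    (hbi : (i : ℕ) / m = ℓ - 1) (hbj : (j : ℕ) / m = ℓ - 1)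
    (hzero : Ehom z ((AddMonoidAlgebra.single (Finsupp.single i 1) (1 : K)
              - AddMonoidAlgebra.single (Finsupp.single j 1) t⁻¹)
            * (AddMonoidAlgebra.single 0 1
              - AddMonoidAlgebra.single
                  (Finsupp.single i (-1) + Finsupp.single j (-1)) (t ^ ℓ * q))) = 0) :
    evalAt (fun i => ((z i : K))) (∏ ℓ ∈ Finset.Icc 1 k,
        ∏ p ∈ (Finset.univ : Finset (Fin (k * m) × Fin (k * m))).filter
            (fun p => m * (ℓ - 1) < (p.1 : ℕ) + 1 ∧ (p.1 : ℕ) < (p.2 : ℕ) ∧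
              (p.2 : ℕ) + 1 ≤ m * ℓ),
          ((AddMonoidAlgebra.single (Finsupp.single p.1 1) (1 : K)
              - AddMonoidAlgebra.single (Finsupp.single p.2 1) t⁻¹)
            * (AddMonoidAlgebra.single 0 1
              - AddMonoidAlgebra.single
                  (Finsupp.single p.1 (-1) + Finsupp.single p.2 (-1)) (t ^ ℓ * q)))) = 0 := by
  rw [evalAt_eq, map_prod]
  refine Finset.prod_eq_zero (Finset.mem_Icc.mpr ⟨hl1, hl2⟩) ?_
  rw [map_prod]
  refine Finset.prod_eq_zero (i := (i, j)) ?_ hzero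
  rw [Finset.mem_filter]
  have h1 : m * (ℓ - 1) ≤ (i : ℕ) := by
    have := Nat.div_mul_le_self (i : ℕ) m
    rw [hbi] at this
    calc m * (ℓ - 1) = (ℓ - 1) * m := Nat.mul_comm _ _
      _ ≤ (i : ℕ) := by
        have h := Nat.div_mul_le_self (i : ℕ) m
        rw [hbi] at h; exact h
  have hms : m * (ℓ - 1) + m = m * ℓ := by
    have h' : ℓ - 1 + 1 = ℓ := by omega
    calc m * (ℓ - 1) + m = m * (ℓ - 1 + 1) := (Nat.mul_succ m _).symm
      _ = m * ℓ := by rw [h']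
  have h2 : (j : ℕ) < m * ℓ := by
    have hmod := Nat.mod_add_div (j : ℕ) m
    have hlt : (j : ℕ) % m < m := Nat.mod_lt _ (by omega)
    rw [hbj] at hmod
    omega
  have hij' : (i : ℕ) < (j : ℕ) := hij
  refine ⟨Finset.mem_univ _, ?_⟩
  show m * (ℓ - 1) < (i : ℕ) + 1 ∧ (i : ℕ) < (j : ℕ) ∧ (j : ℕ) + 1 ≤ m * ℓ
  omega

set_option maxHeartbeats 1000000 in
/-- combinatorial core: from a relabeled wheel chain, find a vanishing pair -/
theorem combi_core {k m : ℕ} (hk : 1 ≤ k) (hm : 1 ≤ m) {K : Type*} [Field K]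
    (t : K) (ht : t ≠ 0)
    (z : Fin (k * m) → Kˣ)
    (J : ℕ → Fin (k * m)) (sg' : ℕ → ℤ)
    (hJinj : ∀ a b : ℕ, a ≤ k → b ≤ k → J a = J b → a = b)
    (hsg : ∀ j, sg' j = 1 ∨ sg' j = -1)
    (hstepV : ∀ j, j < k → ((z (J j) : K) ^ (sg' j)) * t = (z (J (j+1)) : K) ^ (sg' (j+1)))
    (hstepO : ∀ j, j < k →
      (sg' j = 1 ∧ sg' (j+1) = 1 ∧ J j < J (j+1)) ∨
      (sg' j = 1 ∧ sg' (j+1) = -1) ∨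
      (sg' j = -1 ∧ sg' (j+1) = -1 ∧ J (j+1) < J j)) :
    ∃ (ℓ : ℕ) (i j : Fin (k * m)), 1 ≤ ℓ ∧ ℓ ≤ k ∧ i < j ∧
      (i : ℕ) / m = ℓ - 1 ∧ (j : ℕ) / m = ℓ - 1 ∧
      ((z j : K) = t * (z i : K) ∨ (z i : K) * (z j : K) * t ^ (k + 1 - ℓ) = 1) := by
  classical
  obtain ⟨bf, hbf⟩ : ∃ f : ℕ → ℕ, ∀ j, f j = (J j : ℕ) / m + 1 := ⟨_, fun _ => rfl⟩
  have hbfk : ∀ j, bf j ≤ k := by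
    intro j
    have h1 : (J j : ℕ) < k * m := (J j).isLt
    have h2 : (J j : ℕ) / m < k := (Nat.div_lt_iff_lt_mul (by omega)).mpr h1
    rw [hbf]; exact h2
  -- chain of values
  have hVchain : ∀ j, j ≤ k →
      ((z (J j) : K) ^ (sg' j)) = ((z (J 0) : K) ^ (sg' 0)) * t ^ j := by
    intro j
    induction j with
    | zero => intro _; rw [pow_zero, mul_one]
    | succ j ih =>
      intro hj
      rw [← hstepV j (by omega), ih (by omega), pow_succ, mul_assoc]
  -- sign prefix
  have hexs : ∃ j, j = k + 1 ∨ sg' j = -1 := ⟨k + 1, Or.inl rfl⟩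
  set s := Nat.find hexs with hs
  have hsle : s ≤ k + 1 := Nat.find_le (Or.inl rfl)
  have hplus : ∀ j, j < s → sg' j = 1 := by
    intro j hj
    have h := Nat.find_min hexs hj
    push_neg at h
    rcases hsg j with h' | h'
    · exact h'
    · exact absurd h' h.2
  have hminus : ∀ j, s ≤ j → j ≤ k → sg' j = -1 := by
    intro j hsj
    refine Nat.le_induction ?_ ?_ j hsj
    · intro hsk
      rcases Nat.find_spec hexs with h | h
      · omega
      · exact h
    · intro nn hn ih h1
      have hsn : sg' nn = -1 := ih (by omega)
      rcases hstepO nn (by omega) with ⟨h, _⟩ | ⟨h, _⟩ | ⟨_, h2, _⟩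
      · omega
      · omega
      · exact h2
  by_cases hcase : ∃ j, j < k ∧ sg' j = sg' (j+1) ∧ bf j = bf (j+1)
  · -- Case 1: adjacent equal-sign pair in the same block
    obtain ⟨j, hjk, hse, hbe⟩ := hcase
    have hbj : bf j ≤ k := hbfk j
    have hdivj : (J j : ℕ) / m = bf j - 1 := by rw [hbf]; exact (Nat.succ_sub_one _).symm
    have hdivj1 : (J (j+1) : ℕ) / m = bf j - 1 := by
      rw [hbe, hbf]; exact (Nat.succ_sub_one _).symm
    rcases hsg j with h1 | h1
    · have h2 : sg' (j+1) = 1 := by rw [← hse]; exact h1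
      have horder : J j < J (j+1) := by
        rcases hstepO j hjk with ⟨_, _, h⟩ | ⟨_, h⟩ | ⟨h, _, _⟩
        · exact h
        · omega
        · omega
      have hv := hstepV j hjk
      rw [h1, h2, zpow_one, zpow_one] at hv
      refine ⟨bf j, J j, J (j+1), by rw [hbf]; exact Nat.le_add_left 1 _, hbj, horder,
        hdivj, hdivj1, Or.inl ?_⟩
      rw [← hv]; ring
    · have h2 : sg' (j+1) = -1 := by rw [← hse]; exact h1
      have horder : J (j+1) < J j := by
        rcases hstepO j hjk with ⟨h, _, _⟩ | ⟨h, _⟩ | ⟨_, _, h⟩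
        · omega
        · omega
        · exact h
      have hv := hstepV j hjk
      rw [h1, h2, zpow_neg_one, zpow_neg_one] at hv
      have hA : (z (J j) : K) ≠ 0 := Units.ne_zero _
      have hB : (z (J (j+1)) : K) ≠ 0 := Units.ne_zero _
      have hzval : (z (J j) : K) = t * (z (J (j+1)) : K) := by
        field_simp at hv
        exact hv.symm
      exact ⟨bf j, J (j+1), J j, by rw [hbf]; exact Nat.le_add_left 1 _, hbj, horder,
        hdivj1, hdivj, Or.inl hzval⟩
  · -- Case 2
    push_neg at hcase
    have hmono : ∀ x y, x < y → y < s → bf x < bf y := by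
      intro x y hxy hys
      rcases Nat.eq_zero_or_pos s with h0 | h0
      · omega
      refine strict_chain (hi := s - 1) ?_ x y hxy (by omega)
      intro j hj
      have hj1 : j + 1 < s := by omega
      have hjk : j < k := by omega
      have ha := hplus j (by omega)
      have hb := hplus (j+1) hj1
      have hJlt : J j < J (j+1) := by
        rcases hstepO j hjk with ⟨_, _, h⟩ | ⟨_, h⟩ | ⟨h, _, _⟩
        · exact h
        · omega
        · omega
      have hle : bf j ≤ bf (j+1) := by
        have h' : (J j : ℕ) ≤ (J (j+1) : ℕ) := le_of_lt hJlt
        have h'' := Nat.div_le_div_right (c := m) h'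
        rw [hbf, hbf]; exact Nat.add_le_add_right h'' 1
      have hne : bf j ≠ bf (j+1) := hcase j hjk (by rw [ha, hb])
      omega
    have hanti : ∀ x y, s ≤ x → x < y → y < k + 1 → bf y < bf x := by
      intro x y hx hxy hyk
      refine strict_chain' (lo := s) (hi := k) ?_ x y hx hxy (by omega)
      intro j hj hjk1
      have hjk : j < k := by omega
      have ha := hminus j hj (by omega)
      have hb := hminus (j+1) (by omega) hjk1
      have hJlt : J (j+1) < J j := by
        rcases hstepO j hjk with ⟨h, _, _⟩ | ⟨h, _⟩ | ⟨_, _, h⟩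
        · omega
        · omega
        · exact h
      have hle : bf (j+1) ≤ bf j := by
        have h' : (J (j+1) : ℕ) ≤ (J j : ℕ) := le_of_lt hJlt
        have h'' := Nat.div_le_div_right (c := m) h'
        rw [hbf, hbf]; exact Nat.add_le_add_right h'' 1
      have hne : bf j ≠ bf (j+1) := hcase j hjk (by rw [ha, hb])
      omega
    obtain ⟨N, hN⟩ : ∃ g : ℕ → ℕ, ∀ L,
        g L = ((Finset.range (k+1)).filter (fun j => bf j < L)).card := ⟨_, fun _ => rfl⟩
    have hN1 : N 1 = 0 := by
      rw [hN]
      rw [Finset.filter_false_of_mem, Finset.card_empty]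
      intro j _
      rw [hbf]
      exact Nat.not_lt.mpr (Nat.le_add_left 1 _)
    have hNk : N (k+1) = k+1 := by
      rw [hN]
      rw [Finset.filter_true_of_mem, Finset.card_range]
      intro j _
      exact Nat.lt_succ_of_le (hbfk j)
    obtain ⟨ℓ, hl1, hlk, hNl, hNl1⟩ := crossing hN1 hNk hk
    have hsplitfun : ∀ (P : ℕ → Prop) [DecidablePred P],
        ((Finset.range (k+1)).filter (fun j => P j)).card
        = ((Finset.range s).filter (fun j => P j)).card
          + ((Finset.Ico s (k+1)).filter (fun j => P j)).card := by
      intro P _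
      rw [Finset.range_eq_Ico, ← Finset.Ico_union_Ico_eq_Ico (Nat.zero_le s) hsle,
        Finset.filter_union, Finset.card_union_of_disjoint, ← Finset.range_eq_Ico]
      exact Finset.disjoint_filter_filter (Finset.Ico_disjoint_Ico_consecutive 0 s (k+1))
    have hiff : ∀ j : ℕ, (bf j < ℓ + 1) ↔ (bf j < ℓ ∨ bf j = ℓ) := fun j =>
      Nat.lt_succ_iff_lt_or_eq
    have hsub : N (ℓ+1) ≤ N ℓ + ((Finset.range (k+1)).filter (fun j => bf j = ℓ)).card := by
      have e1 : ((Finset.range (k+1)).filter (fun j => bf j < ℓ + 1))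
          = ((Finset.range (k+1)).filter (fun j => bf j < ℓ ∨ bf j = ℓ)) := by
        apply Finset.filter_congr
        intro j _
        exact hiff j
      rw [hN, hN, e1, Finset.filter_or]
      exact Finset.card_union_le _ _
    have hmS : ((Finset.range s).filter (fun j => bf j = ℓ)).card ≤ 1 :=
      card_eq_le_one_inc hmono
    have hmI : ((Finset.Ico s (k+1)).filter (fun j => bf j = ℓ)).card ≤ 1 :=
      card_eq_le_one_dec hanti
    have e2 := hsplitfun (fun j => bf j = ℓ)
    have e3 := hsplitfun (fun j => bf j < ℓ)
    have hNlval : N ℓ = ((Finset.range s).filter (fun j => bf j < ℓ)).card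
        + ((Finset.Ico s (k+1)).filter (fun j => bf j < ℓ)).card := by
      rw [hN]; exact e3
    have hmS1 : ((Finset.range s).filter (fun j => bf j = ℓ)).card = 1 := by omega
    have hmI1 : ((Finset.Ico s (k+1)).filter (fun j => bf j = ℓ)).card = 1 := by omega
    obtain ⟨x, hx⟩ := Finset.card_eq_one.mp hmS1
    obtain ⟨y, hy⟩ := Finset.card_eq_one.mp hmI1
    have hxm : x ∈ (Finset.range s).filter (fun j => bf j = ℓ) := by
      rw [hx]; exact Finset.mem_singleton_self x
    have hym : y ∈ (Finset.Ico s (k+1)).filter (fun j => bf j = ℓ) := by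
      rw [hy]; exact Finset.mem_singleton_self y
    rw [Finset.mem_filter, Finset.mem_range] at hxm
    rw [Finset.mem_filter, Finset.mem_Ico] at hym
    obtain ⟨hxs, hbfx⟩ := hxm
    obtain ⟨⟨hys, hyk⟩, hbfy⟩ := hym
    -- counts
    have hNS : ((Finset.range s).filter (fun j => bf j < ℓ)).card = x := by
      have h' := count_lt_inc hxs hmono
      rw [hbfx] at h'
      rw [h', Finset.card_range]
    have hNI : ((Finset.Ico s (k+1)).filter (fun j => bf j < ℓ)).card = k - y := by
      have h' := count_lt_dec hys hyk hanti
      rw [hbfy] at h'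
      rw [h', Nat.card_Ico]
      omega
    have hyx : y = x + (k + 1 - ℓ) := by omega
    -- values
    have hxk : x ≤ k := by omega
    have hyk' : y ≤ k := by omega
    have hsgx : sg' x = 1 := hplus x hxs
    have hsgy : sg' y = -1 := hminus y hys hyk'
    have hvx := hVchain x hxk
    have hvy := hVchain y hyk'
    rw [hsgx, zpow_one] at hvx
    rw [hsgy, zpow_neg_one] at hvy
    have hV0 : ((z (J 0) : K) ^ (sg' 0)) ≠ 0 := zpow_ne_zero _ (Units.ne_zero _)
    have htp : (t : K) ^ x ≠ 0 := pow_ne_zero _ ht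
    have htd : (t : K) ^ (k + 1 - ℓ) ≠ 0 := pow_ne_zero _ ht
    have hzy : (z (J y) : K) = (((z (J 0) : K) ^ (sg' 0)) * t ^ y)⁻¹ := by
      rw [← hvy, inv_inv]
    have hprod : (z (J x) : K) * (z (J y) : K) * t ^ (k + 1 - ℓ) = 1 := by
      rw [hvx, hzy, hyx, pow_add]
      field_simp
    have hxyne : J x ≠ J y := by
      intro h
      have := hJinj x y hxk hyk' h
      omega
    have hdivx : (J x : ℕ) / m = ℓ - 1 := by
      rw [hbf] at hbfx; exact Nat.eq_sub_of_add_eq hbfx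
    have hdivy : (J y : ℕ) / m = ℓ - 1 := by
      rw [hbf] at hbfy; exact Nat.eq_sub_of_add_eq hbfy
    rcases lt_or_gt_of_ne hxyne with hlt | hgt
    · exact ⟨ℓ, J x, J y, hl1, hlk, hlt, hdivx, hdivy, Or.inr hprod⟩
    · refine ⟨ℓ, J y, J x, hl1, hlk, hgt, hdivy, hdivx, Or.inr ?_⟩
      rw [← hprod]; ring


theorem aux_val_one {k : ℕ} (hk : 1 ≤ k) : ((1 : Fin (k+1)) : ℕ) = 1 := by
  rw [Fin.val_one']
  exact Nat.mod_eq_of_lt (by omega)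

theorem finSucc_eq {k : ℕ} (hk : 1 ≤ k) (x : Fin (k+1)) : finSucc x = x + 1 := by
  apply Fin.ext
  simp only [finSucc, Fin.val_add, aux_val_one hk]

open Fin.NatCast

theorem castinj {k : ℕ} : ∀ a b : ℕ, a < k + 1 → b < k + 1 →
    ((a : Fin (k+1)) = (b : Fin (k+1))) → a = b := by
  intro a b ha hb h
  have h2 := congrArg Fin.val h
  rwa [Fin.val_cast_of_lt ha, Fin.val_cast_of_lt hb] at h2

theorem cast_k_add_one {k : ℕ} (hk : 1 ≤ k) : ((k : ℕ) : Fin (k+1)) + 1 = 0 := by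
  have h1 : (((k+1 : ℕ)) : Fin (k+1)) = 0 := Fin.natCast_self (k+1)
  push_cast at h1
  exact h1

/-- for t^{k+1}q = 1 and n = km, the factorized Laurent polynomial
∏_{ℓ=1}^{k} ∏_{m(ℓ−1)<i<j≤mℓ} (x_i − t⁻¹x_j)(1 − t^ℓ q x_i⁻¹ x_j⁻¹)
satisfies the 1-wheel condition of type (k+1,1). -/
theorem stmt6 {K : Type*} [Field K] (k m : ℕ) (hk : 1 ≤ k) (hm : 1 ≤ m)
    (t q : K) (ht : t ≠ 0) (hq : q ≠ 0) (hspec : t ^ (k + 1) * q = 1) :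
    SatisfiesWheel (n := k * m) (k + 1) 1 t q 1
      (∏ ℓ ∈ Finset.Icc 1 k,
        ∏ p ∈ (Finset.univ : Finset (Fin (k * m) × Fin (k * m))).filter
            (fun p => m * (ℓ - 1) < (p.1 : ℕ) + 1 ∧ (p.1 : ℕ) < (p.2 : ℕ) ∧
              (p.2 : ℕ) + 1 ≤ m * ℓ),
          ((AddMonoidAlgebra.single (Finsupp.single p.1 1) (1 : K)
              - AddMonoidAlgebra.single (Finsupp.single p.2 1) t⁻¹)
            * (AddMonoidAlgebra.single 0 1
              - AddMonoidAlgebra.single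
                  (Finsupp.single p.1 (-1) + Finsupp.single p.2 (-1)) (t ^ ℓ * q)))) := by
  intro z hw
  obtain ⟨idxF, sgF, pF, hwheel, -⟩ := hw
  obtain ⟨hinj, hsgpm, hsum, hrel, hord⟩ := hwheel 0
  obtain ⟨m0, hpm0, hpother⟩ := sum_eq_one_nat (pF 0) hsum
  set cc : Fin (k+1) := m0 + 1 with hcc
  have hm0k : cc + ((k : ℕ) : Fin (k+1)) = m0 := by
    rw [hcc, add_assoc, add_comm (1 : Fin (k+1)) (((k : ℕ)) : Fin (k+1)),
      cast_k_add_one hk, add_zero]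
  have hposne : ∀ j : ℕ, j < k → cc + ((j : ℕ) : Fin (k+1)) ≠ m0 := by
    intro j hj h
    rw [← hm0k] at h
    have h2 := add_left_cancel h
    have h3 := castinj j k (by omega) (by omega) h2
    omega
  have hsucc : ∀ j : ℕ,
      finSucc (cc + ((j : ℕ) : Fin (k+1))) = cc + (((j+1 : ℕ)) : Fin (k+1)) := by
    intro j
    rw [finSucc_eq hk]
    push_cast
    rw [add_assoc]
  have hJinj : ∀ a b : ℕ, a ≤ k → b ≤ k →
      idxF 0 (cc + ((a : ℕ) : Fin (k+1))) = idxF 0 (cc + ((b : ℕ) : Fin (k+1))) → a = b := by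
    intro a b ha hb h
    exact castinj a b (by omega) (by omega) (add_left_cancel (hinj h))
  have hstepV : ∀ j : ℕ, j < k →
      ((z (idxF 0 (cc + ((j : ℕ) : Fin (k+1)))) : K)
          ^ (sgF 0 (cc + ((j : ℕ) : Fin (k+1))))) * t
        = (z (idxF 0 (cc + (((j+1 : ℕ)) : Fin (k+1)))) : K)
          ^ (sgF 0 (cc + (((j+1 : ℕ)) : Fin (k+1)))) := by
    intro j hj
    have hp0 : pF 0 (cc + ((j : ℕ) : Fin (k+1))) = 0 := hpother _ (hposne j hj)
    have hr := hrel (cc + ((j : ℕ) : Fin (k+1)))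
    rw [hp0, pow_zero, mul_one, hsucc j] at hr
    exact hr
  have hstepO : ∀ j : ℕ, j < k →
      (sgF 0 (cc + ((j : ℕ) : Fin (k+1))) = 1
        ∧ sgF 0 (cc + (((j+1 : ℕ)) : Fin (k+1))) = 1
        ∧ idxF 0 (cc + ((j : ℕ) : Fin (k+1))) < idxF 0 (cc + (((j+1 : ℕ)) : Fin (k+1)))) ∨
      (sgF 0 (cc + ((j : ℕ) : Fin (k+1))) = 1
        ∧ sgF 0 (cc + (((j+1 : ℕ)) : Fin (k+1))) = -1) ∨
      (sgF 0 (cc + ((j : ℕ) : Fin (k+1))) = -1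
        ∧ sgF 0 (cc + (((j+1 : ℕ)) : Fin (k+1))) = -1
        ∧ idxF 0 (cc + (((j+1 : ℕ)) : Fin (k+1))) < idxF 0 (cc + ((j : ℕ) : Fin (k+1)))) := by
    intro j hj
    have ho := hord _ (hpother _ (hposne j hj))
    rw [hsucc j] at ho
    exact ho
  obtain ⟨ℓ, i, j, hl1, hlk, hij, hbi, hbj, hdisj⟩ :=
    combi_core hk hm t ht z (fun j => idxF 0 (cc + ((j : ℕ) : Fin (k+1))))
      (fun j => sgF 0 (cc + ((j : ℕ) : Fin (k+1)))) hJinj (fun j => hsgpm _) hstepV hstepO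
  refine key_vanish hm t q z ℓ hl1 hlk i j hij hbi hbj ?_
  rw [Ehom_factor]
  rcases hdisj with hz | hz
  · have h1 : (z i : K) - t⁻¹ * (z j : K) = 0 := by
      rw [hz]
      field_simp
      simp
    rw [h1, zero_mul]
  · have htd : t ^ (k+1-ℓ) ≠ 0 := pow_ne_zero _ ht
    have hprod : (z i : K) * (z j : K) = (t ^ (k+1-ℓ))⁻¹ := by
      rw [inv_eq_one_div, eq_div_iff htd]; exact hz
    have h2 : (1 : K) - t^ℓ * q * ((z i : K))⁻¹ * ((z j : K))⁻¹ = 0 := by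
      have h3 : ((z i : K))⁻¹ * ((z j : K))⁻¹ = t^(k+1-ℓ) := by
        rw [← mul_inv, hprod, inv_inv]
      rw [mul_assoc (t^ℓ * q), h3]
      have h4 : t^ℓ * q * t^(k+1-ℓ) = t^(k+1) * q := by
        rw [mul_right_comm, ← pow_add]
        congr 2
        omega
      rw [h4, hspec, sub_self]
    rw [h2, mul_zero]


end CCnDAHA
end
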